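/- arXiv:2109.10880 — 4 statements merged into one kernel-verified Lean document; each statement's English description precedes it below -/
import Mathlib

section
/- Courant–Fischer theorem for T-product tensors: Let C be a symmetric T-product tensor in R^{m×m×p}, block-diagonalized by the DFT into Hermitian matrices C_1,...,C_p. Given positive integers k_1,...,k_p with 1 ≤ k_i ≤ m, let λ_k̃ = min_i λ_{i,k_i} (where λ_{i,j} is the j-th largest eigenvalue of C_i). Then λ_k̃ = max over subspaces S ⊂ R^{m×1×p} whose i-th Fourier-component has dimension k_i, of min over nonzero X ∈ S of ⟨X, C ⋆ X⟩/⟨X, X⟩. -/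
open scoped BigOperators
open Matrix

/-- The Rayleigh quotient `⟨X, C ⋆ X⟩ / ⟨X, X⟩` of a symmetric T-product tensor,
expressed through its Fourier components: the blocks `C i` of the DFT
block-diagonalization and the Fourier components `x i` of the tensor `X ∈ R^{m×1×p}`
(the common factor `1/p` in numerator and denominator cancels). -/
noncomputable def rayleigh {m p : ℕ} (C : Fin p → Matrix (Fin m) (Fin m) ℂ)
    (x : Fin p → Fin m → ℂ) : ℝ :=
  (∑ i, ∑ a, star (x i a) * ((C i).mulVec (x i)) a).re /
    ∑ i, ∑ a, ‖x i a‖ ^ 2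

namespace CF

variable {m : ℕ}

/-- Functions vanishing on coordinates satisfying `P`. -/
noncomputable def coordSub (P : Fin m → Prop) [DecidablePred P] : Submodule ℂ (Fin m → ℂ) :=
  LinearMap.ker (LinearMap.funLeft ℂ ℂ (Subtype.val : {j // P j} → Fin m))

lemma mem_coordSub {P : Fin m → Prop} [DecidablePred P] {y : Fin m → ℂ} :
    y ∈ coordSub P ↔ ∀ j, P j → y j = 0 := by
  simp only [coordSub, LinearMap.mem_ker, LinearMap.funLeft_apply, funext_iff]
  constructor
  · intro h j hj; exact h ⟨j, hj⟩
  · intro h j; exact h j.1 j.2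

lemma finrank_coordSub (P : Fin m → Prop) [DecidablePred P] :
    Module.finrank ℂ (coordSub P) = m - Fintype.card {j // P j} := by
  classical
  have hsurj : Function.Surjective (LinearMap.funLeft ℂ ℂ (Subtype.val : {j // P j} → Fin m)) :=
    LinearMap.funLeft_surjective_of_injective ℂ ℂ _ Subtype.val_injective
  have h := LinearMap.finrank_range_add_finrank_ker
    (LinearMap.funLeft ℂ ℂ (Subtype.val : {j // P j} → Fin m))
  rw [LinearMap.range_eq_top.mpr hsurj, finrank_top] at h
  rw [Module.finrank_fintype_fun_eq_card, Module.finrank_fintype_fun_eq_card] at h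
  simp only [Fintype.card_fin] at h
  unfold coordSub
  omega

lemma card_lt (k : Fin m) : Fintype.card {j : Fin m // j < k} = (k : ℕ) := by
  rw [Fintype.card_congr
    (Equiv.subtypeEquivRight (fun j => Iff.rfl) : {j : Fin m // j < k} ≃ (Set.Iio k))]
  rw [← Set.toFinset_card, Set.toFinset_Iio, Fin.card_Iio]

lemma card_gt (k : Fin m) : Fintype.card {j : Fin m // k < j} = m - 1 - (k : ℕ) := by
  rw [Fintype.card_congr
    (Equiv.subtypeEquivRight (fun j => Iff.rfl) : {j : Fin m // k < j} ≃ (Set.Ioi k))]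
  rw [← Set.toFinset_card, Set.toFinset_Ioi, Fin.card_Ioi]

/-- The linear equivalence `x ↦ Vᴴ *ᵥ x` for unitary `V`. -/
noncomputable def uEquiv (V : Matrix (Fin m) (Fin m) ℂ)
    (hV : V ∈ Matrix.unitaryGroup (Fin m) ℂ) : (Fin m → ℂ) ≃ₗ[ℂ] (Fin m → ℂ) :=
  LinearEquiv.ofLinear (Matrix.mulVecLin Vᴴ) (Matrix.mulVecLin V)
    (by rw [← Matrix.mulVecLin_mul, ← Matrix.star_eq_conjTranspose,
        (Matrix.mem_unitaryGroup_iff'.mp hV : star V * V = 1), Matrix.mulVecLin_one])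
    (by rw [← Matrix.mulVecLin_mul, ← Matrix.star_eq_conjTranspose,
        (Matrix.mem_unitaryGroup_iff.mp hV : V * star V = 1), Matrix.mulVecLin_one])

@[simp] lemma uEquiv_apply (V : Matrix (Fin m) (Fin m) ℂ)
    (hV : V ∈ Matrix.unitaryGroup (Fin m) ℂ) (x : Fin m → ℂ) :
    uEquiv V hV x = Vᴴ.mulVec x := rfl

lemma finrank_comap_uEquiv (V : Matrix (Fin m) (Fin m) ℂ)
    (hV : V ∈ Matrix.unitaryGroup (Fin m) ℂ) (K : Submodule ℂ (Fin m → ℂ)) :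
    Module.finrank ℂ (Submodule.comap (uEquiv V hV : (Fin m → ℂ) →ₗ[ℂ] (Fin m → ℂ)) K) =
      Module.finrank ℂ K := by
  rw [Submodule.comap_equiv_eq_map_symm]
  exact LinearEquiv.finrank_map_eq _ _

lemma quad_eq (V : Matrix (Fin m) (Fin m) ℂ) (μ : Fin m → ℝ) (x : Fin m → ℂ) :
    ∑ a, star (x a) * ((V * Matrix.diagonal (fun j => (μ j : ℂ)) * Vᴴ).mulVec x) a
      = ∑ j, (μ j : ℂ) * (‖(Vᴴ.mulVec x) j‖ ^ 2 : ℝ) := by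
  set y := Vᴴ.mulVec x with hy
  have h1 : ∑ a, star (x a) * ((V * Matrix.diagonal (fun j => (μ j : ℂ)) * Vᴴ).mulVec x) a
      = star x ⬝ᵥ (V * Matrix.diagonal (fun j => (μ j : ℂ)) * Vᴴ).mulVec x := by
    simp [dotProduct, Pi.star_apply]
  rw [h1]
  have h2 : (V * Matrix.diagonal (fun j => (μ j : ℂ)) * Vᴴ).mulVec x
      = V.mulVec ((Matrix.diagonal (fun j => (μ j : ℂ))).mulVec y) := by
    rw [hy, Matrix.mulVec_mulVec, Matrix.mulVec_mulVec]
  rw [h2, Matrix.dotProduct_mulVec]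
  have h3 : Matrix.vecMul (star x) V = star y := by
    rw [hy, Matrix.star_mulVec, Matrix.conjTranspose_conjTranspose]
  rw [h3]
  have h4 : ∀ j, (Matrix.diagonal (fun j => (μ j : ℂ))).mulVec y j = (μ j : ℂ) * y j := by
    intro j; rw [Matrix.mulVec_diagonal]
  simp only [dotProduct, h4, Pi.star_apply]
  refine Finset.sum_congr rfl fun j _ => ?_
  rw [← mul_assoc, mul_comm (star (y j)), mul_assoc]
  congr 1
  rw [Complex.star_def, mul_comm, Complex.mul_conj']
  norm_cast

lemma den_eq (V : Matrix (Fin m) (Fin m) ℂ) (hV : V ∈ Matrix.unitaryGroup (Fin m) ℂ)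
    (x : Fin m → ℂ) :
    ∑ a, (‖x a‖ ^ 2 : ℝ) = ∑ j, ‖(Vᴴ.mulVec x) j‖ ^ 2 := by
  set y := Vᴴ.mulVec x with hy
  have key : star y ⬝ᵥ y = star x ⬝ᵥ x := by
    have h3 : star y = Matrix.vecMul (star x) V := by
      rw [hy, Matrix.star_mulVec, Matrix.conjTranspose_conjTranspose]
    rw [h3, hy, ← Matrix.dotProduct_mulVec, Matrix.mulVec_mulVec,
      ← Matrix.star_eq_conjTranspose, (Matrix.mem_unitaryGroup_iff.mp hV : V * star V = 1),
      Matrix.one_mulVec]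
  have norm_dot : ∀ z : Fin m → ℂ, star z ⬝ᵥ z = ((∑ a, (‖z a‖ ^ 2 : ℝ) : ℝ) : ℂ) := by
    intro z
    push_cast
    simp only [dotProduct, Pi.star_apply]
    refine Finset.sum_congr rfl fun a _ => ?_
    rw [Complex.star_def, mul_comm, Complex.mul_conj']
  have h := key
  rw [norm_dot, norm_dot] at h
  exact_mod_cast h.symm

variable {p : ℕ}

/-- Rayleigh quotient in Fourier (eigenbasis) coordinates. -/
lemma rayleigh_eq (C V : Fin p → Matrix (Fin m) (Fin m) ℂ)
    (μ : Fin p → Fin m → ℝ)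
    (hV : ∀ i, V i ∈ Matrix.unitaryGroup (Fin m) ℂ)
    (hC : ∀ i, C i = V i * Matrix.diagonal (fun j => (μ i j : ℂ)) * (V i)ᴴ)
    (x : Fin p → Fin m → ℂ) :
    rayleigh C x = (∑ i, ∑ j, μ i j * ‖((V i)ᴴ.mulVec (x i)) j‖ ^ 2) /
      (∑ i, ∑ j, ‖((V i)ᴴ.mulVec (x i)) j‖ ^ 2) := by
  unfold rayleigh
  congr 1
  · have h : (∑ i, ∑ a, star (x i a) * ((C i).mulVec (x i)) a)
        = ((∑ i, ∑ j, μ i j * ‖((V i)ᴴ.mulVec (x i)) j‖ ^ 2 : ℝ) : ℂ) := by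
      push_cast
      refine Finset.sum_congr rfl fun i _ => ?_
      rw [hC i]
      simpa using quad_eq (V i) (μ i) (x i)
    rw [h, Complex.ofReal_re]
  · exact Finset.sum_congr rfl fun i _ => den_eq (V i) (hV i) (x i)

lemma den_pos {x : Fin p → Fin m → ℂ} (hx : x ≠ 0) :
    0 < ∑ i, ∑ a, (‖x i a‖ ^ 2 : ℝ) := by
  have : ∃ i a, x i a ≠ 0 := by
    by_contra h
    push_neg at h
    exact hx (funext fun i => funext fun a => h i a)
  obtain ⟨i, a, hia⟩ := this
  refine Finset.sum_pos' (fun i _ => Finset.sum_nonneg fun a _ => sq_nonneg _) ⟨i, Finset.mem_univ i, ?_⟩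
  refine Finset.sum_pos' (fun a _ => sq_nonneg _) ⟨a, Finset.mem_univ a, ?_⟩
  exact pow_pos (norm_pos_iff.mpr hia) 2

lemma den_pos' (V : Fin p → Matrix (Fin m) (Fin m) ℂ)
    (hV : ∀ i, V i ∈ Matrix.unitaryGroup (Fin m) ℂ)
    {x : Fin p → Fin m → ℂ} (hx : x ≠ 0) :
    0 < ∑ i, ∑ j, ‖((V i)ᴴ.mulVec (x i)) j‖ ^ 2 := by
  have h := den_pos hx
  rwa [Finset.sum_congr rfl fun i _ => den_eq (V i) (hV i) (x i)] at h

lemma le_rayleigh (C V : Fin p → Matrix (Fin m) (Fin m) ℂ)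
    (μ : Fin p → Fin m → ℝ)
    (hV : ∀ i, V i ∈ Matrix.unitaryGroup (Fin m) ℂ)
    (hC : ∀ i, C i = V i * Matrix.diagonal (fun j => (μ i j : ℂ)) * (V i)ᴴ)
    {x : Fin p → Fin m → ℂ} (hx : x ≠ 0) {c : ℝ}
    (h : ∀ i j, ((V i)ᴴ.mulVec (x i)) j ≠ 0 → c ≤ μ i j) :
    c ≤ rayleigh C x := by
  rw [rayleigh_eq C V μ hV hC x, le_div_iff₀ (den_pos' V hV hx)]
  rw [Finset.mul_sum]
  refine Finset.sum_le_sum fun i _ => ?_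
  rw [Finset.mul_sum]
  refine Finset.sum_le_sum fun j _ => ?_
  rcases eq_or_ne (((V i)ᴴ.mulVec (x i)) j) 0 with h0 | h0
  · simp [h0]
  · exact mul_le_mul_of_nonneg_right (h i j h0) (sq_nonneg _)

lemma rayleigh_le (C V : Fin p → Matrix (Fin m) (Fin m) ℂ)
    (μ : Fin p → Fin m → ℝ)
    (hV : ∀ i, V i ∈ Matrix.unitaryGroup (Fin m) ℂ)
    (hC : ∀ i, C i = V i * Matrix.diagonal (fun j => (μ i j : ℂ)) * (V i)ᴴ)
    {x : Fin p → Fin m → ℂ} (hx : x ≠ 0) {c : ℝ}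
    (h : ∀ i j, ((V i)ᴴ.mulVec (x i)) j ≠ 0 → μ i j ≤ c) :
    rayleigh C x ≤ c := by
  rw [rayleigh_eq C V μ hV hC x, div_le_iff₀ (den_pos' V hV hx)]
  rw [Finset.mul_sum]
  refine Finset.sum_le_sum fun i _ => ?_
  rw [Finset.mul_sum]
  refine Finset.sum_le_sum fun j _ => ?_
  rcases eq_or_ne (((V i)ᴴ.mulVec (x i)) j) 0 with h0 | h0
  · simp [h0]
  · exact mul_le_mul_of_nonneg_right (h i j h0) (sq_nonneg _)

end CF

/-- Courant–Fischer for T-product tensors: let `C` be a symmetric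
T-product tensor whose DFT block-diagonalization has Hermitian blocks `C i`
with unitary eigendecomposition `C i = V i * diagonal (μ i) * (V i)ᴴ` and
eigenvalues `μ i 0 ≥ μ i 1 ≥ ⋯` (so `μ i (k i)` is the `(k i + 1)`-th largest
eigenvalue of `C i`, i.e. `λ_{i,k_i}` with `k_i := k i + 1`).  Then
`λ_k̃ = min_i λ_{i,k_i}` is the maximum, over families of Fourier-component
subspaces `S i` of dimension `k i + 1`, of the minimum of the Rayleigh quotient
over nonzero `X` with `x i ∈ S i`. -/
theorem courant_fischer_tproduct {m p : ℕ} [NeZero p]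
    (C V : Fin p → Matrix (Fin m) (Fin m) ℂ)
    (μ : Fin p → Fin m → ℝ)
    (hV : ∀ i, V i ∈ Matrix.unitaryGroup (Fin m) ℂ)
    (hμ : ∀ i, Antitone (μ i))
    (hC : ∀ i, C i = V i * Matrix.diagonal (fun j => (μ i j : ℂ)) * (V i)ᴴ)
    (k : Fin p → Fin m) :
    IsGreatest
      {r : ℝ | ∃ S : (i : Fin p) → Submodule ℂ (Fin m → ℂ),
        (∀ i, Module.finrank ℂ (S i) = (k i : ℕ) + 1) ∧
        IsLeast {q : ℝ | ∃ x : (i : Fin p) → Fin m → ℂ,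
          (∀ i, x i ∈ S i) ∧ x ≠ 0 ∧ q = rayleigh C x} r}
      (⨅ i, μ i (k i)) := by
  classical
  haveI : Nonempty (Fin p) := Fin.pos_iff_nonempty.mp (Nat.pos_of_ne_zero (NeZero.ne p))
  set c := ⨅ i, μ i (k i) with hc
  have hbdd : BddBelow (Set.range fun i => μ i (k i)) := Set.Finite.bddBelow (Set.finite_range _)
  have hcle : ∀ i, c ≤ μ i (k i) := fun i => ciInf_le hbdd i
  set e : (i : Fin p) → (Fin m → ℂ) ≃ₗ[ℂ] (Fin m → ℂ) := fun i => CF.uEquiv (V i) (hV i) with he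
  -- membership characterizations
  have hmemlo : ∀ (i : Fin p) (z : Fin m → ℂ),
      z ∈ Submodule.comap (e i : (Fin m → ℂ) →ₗ[ℂ] (Fin m → ℂ))
          (CF.coordSub (fun j => k i < j)) ↔
        ∀ j, k i < j → ((V i)ᴴ.mulVec z) j = 0 := by
    intro i z
    rw [Submodule.mem_comap]
    exact CF.mem_coordSub
  have hmemhi : ∀ (i : Fin p) (z : Fin m → ℂ),
      z ∈ Submodule.comap (e i : (Fin m → ℂ) →ₗ[ℂ] (Fin m → ℂ))
          (CF.coordSub (fun j => j < k i)) ↔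
        ∀ j, j < k i → ((V i)ᴴ.mulVec z) j = 0 := by
    intro i z
    rw [Submodule.mem_comap]
    exact CF.mem_coordSub
  constructor
  · -- c is attained: choose eigen-subspaces
    set Slo : (i : Fin p) → Submodule ℂ (Fin m → ℂ) := fun i =>
      Submodule.comap (e i : (Fin m → ℂ) →ₗ[ℂ] (Fin m → ℂ))
        (CF.coordSub (fun j => k i < j)) with hSlo
    refine ⟨Slo, ?_, ?_, ?_⟩
    · intro i
      have hk := (k i).isLt
      rw [hSlo]
      rw [CF.finrank_comap_uEquiv, CF.finrank_coordSub, CF.card_gt]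
      omega
    · -- c belongs to the inner set: attained by an eigenvector
      obtain ⟨i₀, hi₀⟩ := Finite.exists_min fun i => μ i (k i)
      have hceq : c = μ i₀ (k i₀) := le_antisymm (hcle i₀) (le_ciInf hi₀)
      set v : Fin m → ℂ := (V i₀).mulVec (Pi.single (k i₀) 1) with hv
      set x₀ : (i : Fin p) → Fin m → ℂ := Pi.single i₀ v with hx₀
      have hY : ∀ i, (V i)ᴴ.mulVec (x₀ i) = if i = i₀ then Pi.single (k i₀) (1:ℂ) else 0 := by
        intro i
        by_cases h : i = i₀
        · subst h
          rw [if_pos rfl, hx₀, Pi.single_eq_same, hv, Matrix.mulVec_mulVec,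
            ← Matrix.star_eq_conjTranspose, Matrix.mem_unitaryGroup_iff'.mp (hV i),
            Matrix.one_mulVec]
        · rw [if_neg h, hx₀, Pi.single_eq_of_ne h, Matrix.mulVec_zero]
      have hx0ne : x₀ ≠ 0 := by
        intro h
        have h2 : (V i₀)ᴴ.mulVec (x₀ i₀) = 0 := by
          rw [h]; simp
        rw [hY i₀, if_pos rfl] at h2
        have := congrFun h2 (k i₀)
        simp [Pi.single_eq_same] at this
      have hsupport : ∀ i j, ((V i)ᴴ.mulVec (x₀ i)) j ≠ 0 → μ i j = c := by
        intro i j hne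
        rw [hY i] at hne
        by_cases h : i = i₀
        · subst h
          rw [if_pos rfl] at hne
          have hj : j = k i := by
            by_contra hj; exact hne (Pi.single_eq_of_ne hj 1)
          rw [hj, hceq]
        · rw [if_neg h] at hne; simp at hne
      refine ⟨x₀, ?_, hx0ne, ?_⟩
      · intro i
        rw [hSlo, hmemlo i]
        intro j hj
        rw [hY i]
        by_cases h : i = i₀
        · rw [if_pos h]
          have : j ≠ k i₀ := by subst h; exact (ne_of_gt hj)
          exact Pi.single_eq_of_ne this 1
        · rw [if_neg h]; rfl
      · refine (le_antisymm ?_ ?_).symm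
        · exact CF.rayleigh_le C V μ hV hC hx0ne fun i j hne => (hsupport i j hne).le
        · exact CF.le_rayleigh C V μ hV hC hx0ne fun i j hne => (hsupport i j hne).ge
    · -- c is a lower bound of Rayleigh quotients on Slo
      rintro q ⟨x, hxS, hx0, rfl⟩
      refine CF.le_rayleigh C V μ hV hC hx0 fun i j hne => ?_
      have hmem := (hmemlo i (x i)).mp (hxS i)
      have hj : ¬ k i < j := fun hj => hne (hmem j hj)
      exact (hcle i).trans (hμ i (not_lt.mp hj))
  · -- upper bound: any attainable r is at most c
    rintro r ⟨S, hdim, hmemr, hlb⟩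
    refine le_ciInf fun i => ?_
    set W : Submodule ℂ (Fin m → ℂ) :=
      Submodule.comap (e i : (Fin m → ℂ) →ₗ[ℂ] (Fin m → ℂ))
        (CF.coordSub (fun j => j < k i)) with hW
    have hWrank : Module.finrank ℂ W = m - (k i : ℕ) := by
      rw [hW, CF.finrank_comap_uEquiv, CF.finrank_coordSub, CF.card_lt]
    have hsum := Submodule.finrank_sup_add_finrank_inf_eq (S i) W
    have hle : Module.finrank ℂ ↥(S i ⊔ W) ≤ m := by
      have h := Submodule.finrank_le (S i ⊔ W)
      rwa [Module.finrank_fintype_fun_eq_card, Fintype.card_fin] at h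
    have hpos : 0 < Module.finrank ℂ ↥(S i ⊓ W) := by
      have hk := (k i).isLt
      have hd := hdim i
      omega
    have hnebot : S i ⊓ W ≠ ⊥ := by
      intro h
      rw [h, finrank_bot] at hpos
      omega
    obtain ⟨v, hv, hv0⟩ := Submodule.exists_mem_ne_zero_of_ne_bot hnebot
    rw [Submodule.mem_inf] at hv
    set x : (i : Fin p) → Fin m → ℂ := Pi.single i v with hx
    have hximem : ∀ i', x i' ∈ S i' := by
      intro i'
      by_cases h : i' = i
      · subst h; rw [hx, Pi.single_eq_same]; exact hv.1
      · rw [hx, Pi.single_eq_of_ne h]; exact (S i').zero_mem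
    have hx0 : x ≠ 0 := by
      intro h
      apply hv0
      have := congrFun h i
      rwa [hx, Pi.single_eq_same] at this
    have hq : rayleigh C x ≤ μ i (k i) := by
      refine CF.rayleigh_le C V μ hV hC hx0 fun i' j hne' => ?_
      by_cases h : i' = i
      · subst h
        have hvW := (hmemhi i' v).mp hv.2
        rw [hx, Pi.single_eq_same] at hne'
        have hj : ¬ j < k i' := fun hj => hne' (hvW j hj)
        exact hμ i' (not_lt.mp hj)
      · exfalso
        rw [hx, Pi.single_eq_of_ne h, Matrix.mulVec_zero] at hne'
        exact hne' rfl
    exact (hlb ⟨x, hximem, hx0, rfl⟩).trans hq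
end

section
/- Generalized Hölder inequality for symmetric gauge functions: Let ρ: R_{≥0}^r → R_{≥0} be a symmetric gauge function. For n nonnegative vectors b_1,...,b_n ∈ R_{≥0}^r and weights α_1,...,α_n > 0 with Σ α_i = 1, one has ρ(Π_i b_{i,1}^{α_i}, ..., Π_i b_{i,r}^{α_i}) ≤ Π_{i=1}^n ρ(b_i)^{α_i}. -/
open scoped BigOperators

/-- A symmetric gauge function on `ℝ^r`: a norm on `Fin r → ℝ` that is invariant
under permutations of coordinates and under taking absolute values entrywise
(so it corresponds, via von Neumann's theorem, to a unitarily invariant norm). -/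
structure SymmGauge (r : ℕ) where
  toFun : (Fin r → ℝ) → ℝ
  nonneg : ∀ x, 0 ≤ toFun x
  triangle : ∀ x y, toFun (x + y) ≤ toFun x + toFun y
  homog : ∀ (c : ℝ) (x), toFun (c • x) = |c| * toFun x
  pos_of_ne_zero : ∀ x, x ≠ 0 → 0 < toFun x
  perm_invariant : ∀ (σ : Equiv.Perm (Fin r)) (x), toFun (x ∘ σ) = toFun x
  abs_invariant : ∀ x, toFun (fun i => |x i|) = toFun x

lemma SymmGauge.map_zero {r : ℕ} (ρ : SymmGauge r) : ρ.toFun 0 = 0 := by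
  have h := ρ.homog 0 0
  simpa using h

/-- decreasing one nonnegative coordinate does not increase a symmetric gauge -/
lemma SymmGauge.update_le {r : ℕ} (ρ : SymmGauge r) (A : Fin r → ℝ) (a : Fin r)
    (t : ℝ) (ht : 0 ≤ t) (htu : t ≤ A a) :
    ρ.toFun (Function.update A a t) ≤ ρ.toFun A := by
  set u := A a with hu
  rcases eq_or_lt_of_le (le_trans ht htu) with h0 | hpos
  · have : t = u := le_antisymm htu (h0 ▸ ht)
    rw [this, hu, Function.update_eq_self]
  · set lam : ℝ := (u + t) / (2 * u)
    set mu : ℝ := (u - t) / (2 * u)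
    have h2u : (0:ℝ) < 2 * u := by linarith
    have hlam : 0 ≤ lam := div_nonneg (by linarith) h2u.le
    have hmu : 0 ≤ mu := div_nonneg (by linarith) h2u.le
    have hlm : lam + mu = 1 := by
      simp only [lam, mu]
      field_simp
      ring
    set A' : Fin r → ℝ := Function.update A a (-u)
    have hcomb : Function.update A a t = lam • A + mu • A' := by
      funext j
      by_cases hj : j = a
      · subst hj
        simp only [Function.update_self, Pi.add_apply, Pi.smul_apply, A',
          Function.update_self, smul_eq_mul]
        rw [← hu]
        simp only [lam, mu]
        field_simp
        ring
      · simp only [Function.update_of_ne hj, Pi.add_apply, Pi.smul_apply, A',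
          Function.update_of_ne hj, smul_eq_mul]
        rw [← add_mul, hlm, one_mul]
    have hA' : ρ.toFun A' = ρ.toFun A := by
      have h1 := ρ.abs_invariant A'
      have h2 := ρ.abs_invariant A
      have habs : (fun i => |A' i|) = fun i => |A i| := by
        funext j
        by_cases hj : j = a
        · subst hj; simp [A', abs_neg, hu]
        · simp [A', Function.update_of_ne hj]
      rw [← h1, habs, h2]
    calc ρ.toFun (Function.update A a t) = ρ.toFun (lam • A + mu • A') := by rw [hcomb]
      _ ≤ ρ.toFun (lam • A) + ρ.toFun (mu • A') := ρ.triangle _ _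
      _ = lam * ρ.toFun A + mu * ρ.toFun A' := by
          rw [ρ.homog, ρ.homog, abs_of_nonneg hlam, abs_of_nonneg hmu]
      _ = (lam + mu) * ρ.toFun A := by rw [hA']; ring
      _ = ρ.toFun A := by rw [hlm, one_mul]

/-- monotonicity of a symmetric gauge on nonnegative vectors -/
lemma SymmGauge.mono {r : ℕ} (ρ : SymmGauge r) (x y : Fin r → ℝ)
    (hx : ∀ j, 0 ≤ x j) (hxy : ∀ j, x j ≤ y j) :
    ρ.toFun x ≤ ρ.toFun y := by
  have key : ∀ s : Finset (Fin r),
      ρ.toFun (fun j => if j ∈ s then x j else y j) ≤ ρ.toFun y := by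
    intro s
    induction s using Finset.induction_on with
    | empty => simp
    | @insert a s' ha ih =>
      have hstep : (fun j => if j ∈ insert a s' then x j else y j)
          = Function.update (fun j => if j ∈ s' then x j else y j) a (x a) := by
        funext j
        by_cases hj : j = a
        · subst hj; simp
        · simp [Function.update_of_ne hj, Finset.mem_insert, hj]
      rw [hstep]
      refine le_trans (ρ.update_le _ a (x a) (hx a) ?_) ih
      simp only [ha, if_neg ha]
      exact hxy a
  have := key Finset.univ
  simpa using this

/-- generalized Hölder inequality for symmetric gauge functions:
for nonnegative vectors `b 1, …, b n ∈ ℝ^r` and weights `α i > 0` with `∑ α i = 1`,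
`ρ (∏ᵢ bᵢ^{αᵢ})` (entrywise weighted geometric mean) is at most `∏ᵢ ρ(bᵢ)^{αᵢ}`. -/
theorem symmGauge_holder {r n : ℕ} (ρ : SymmGauge r)
    (b : Fin n → Fin r → ℝ) (hb : ∀ i j, 0 ≤ b i j)
    (α : Fin n → ℝ) (hα : ∀ i, 0 < α i) (hsum : ∑ i, α i = 1) :
    ρ.toFun (fun j => ∏ i, b i j ^ α i) ≤ ∏ i, ρ.toFun (b i) ^ α i := by
  by_cases hz : ∃ i, ρ.toFun (b i) = 0
  · obtain ⟨i0, hi0⟩ := hz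
    have hb0 : b i0 = 0 := by
      by_contra h
      exact absurd hi0 (ne_of_gt (ρ.pos_of_ne_zero _ h))
    have hlhs : (fun j => ∏ i, b i j ^ α i) = (0 : Fin r → ℝ) := by
      funext j
      refine Finset.prod_eq_zero (Finset.mem_univ i0) ?_
      rw [hb0]
      simp [Real.zero_rpow (ne_of_gt (hα i0))]
    rw [hlhs, ρ.map_zero]
    exact Finset.prod_nonneg fun i _ => Real.rpow_nonneg (ρ.nonneg _) _
  · push_neg at hz
    set c : Fin n → ℝ := fun i => ρ.toFun (b i) with hc
    have hcpos : ∀ i, 0 < c i := fun i => lt_of_le_of_ne (ρ.nonneg _) (Ne.symm (hz i))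
    set C : ℝ := ∏ i, c i ^ α i with hC
    have hCpos : 0 < C := Finset.prod_pos fun i _ => Real.rpow_pos_of_pos (hcpos i) _
    -- pointwise bound via AM-GM
    have hpt : ∀ j, ∏ i, b i j ^ α i ≤ C * ∑ i, (α i / c i) * b i j := by
      intro j
      have hsplit : ∀ i, b i j ^ α i = c i ^ α i * (b i j / c i) ^ α i := by
        intro i
        rw [← Real.mul_rpow (hcpos i).le (div_nonneg (hb i j) (hcpos i).le)]
        rw [mul_div_cancel₀ _ (ne_of_gt (hcpos i))]
      calc ∏ i, b i j ^ α i = C * ∏ i, (b i j / c i) ^ α i := by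
            rw [hC, ← Finset.prod_mul_distrib]
            exact Finset.prod_congr rfl fun i _ => hsplit i
        _ ≤ C * ∑ i, α i * (b i j / c i) := by
            refine mul_le_mul_of_nonneg_left ?_ hCpos.le
            exact Real.geom_mean_le_arith_mean_weighted Finset.univ α _
              (fun i _ => (hα i).le) hsum
              (fun i _ => div_nonneg (hb i j) (hcpos i).le)
        _ = C * ∑ i, (α i / c i) * b i j := by
            congr 1
            exact Finset.sum_congr rfl fun i _ => by ring
    -- monotonicity
    have hmono : ρ.toFun (fun j => ∏ i, b i j ^ α i)
        ≤ ρ.toFun (C • ∑ i, (α i / c i) • b i) := by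
      refine ρ.mono _ _ (fun j => Finset.prod_nonneg fun i _ =>
        Real.rpow_nonneg (hb i j) _) (fun j => ?_)
      have : (C • ∑ i, (α i / c i) • b i) j = C * ∑ i, (α i / c i) * b i j := by
        simp [Finset.sum_apply]
      rw [this]
      exact hpt j
    refine le_trans hmono ?_
    have hsub : ρ.toFun (∑ i, (α i / c i) • b i) ≤ ∑ i, ρ.toFun ((α i / c i) • b i) :=
      Finset.le_sum_of_subadditive ρ.toFun ρ.map_zero.le ρ.triangle _ _
    calc ρ.toFun (C • ∑ i, (α i / c i) • b i)
        = C * ρ.toFun (∑ i, (α i / c i) • b i) := by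
          rw [ρ.homog, abs_of_nonneg hCpos.le]
      _ ≤ C * ∑ i, ρ.toFun ((α i / c i) • b i) := mul_le_mul_of_nonneg_left hsub hCpos.le
      _ = C * ∑ i, α i := by
          congr 1
          refine Finset.sum_congr rfl fun i _ => ?_
          rw [ρ.homog, abs_of_nonneg (div_nonneg (hα i).le (hcpos i).le)]
          show α i / ρ.toFun (b i) * ρ.toFun (b i) = α i
          rw [div_mul_cancel₀ _ (hz i)]
      _ = C := by rw [hsum, mul_one]
end

section
/- Singular value weak majorization for sums of T-product tensors: For symmetric T-product tensors C, D ∈ R^{m×m×p}, the ordered vector of T-singular values satisfies σ(C + D) ≺_w σ(C) + σ(D), i.e., Σ_{j=1}^k σ_j(C+D) ≤ Σ_{j=1}^k σ_j(C) + Σ_{j=1}^k σ_j(D) for all k. -/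
open scoped BigOperators

/-- The singular values of a square complex matrix `Y` (eigenvalues of `|Y|`). -/
noncomputable def sv {m : ℕ} (Y : Matrix (Fin m) (Fin m) ℂ) : Fin m → ℝ :=
  fun j => Real.sqrt ((Matrix.isHermitian_conjTranspose_mul_self Y).eigenvalues j)

section AuxLemmas
open Matrix Polynomial

lemma aux_perm_of_multiset {n : ℕ} {α : Type*} [LinearOrder α] {f g : Fin n → α}
    (h : Multiset.map f Finset.univ.val = Multiset.map g Finset.univ.val) :
    ∃ e : Equiv.Perm (Fin n), ∀ j, f j = g (e j) := by
  have hperm : List.Perm (List.ofFn f) (List.ofFn g) := by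
    rw [Fin.univ_val_map, Fin.univ_val_map] at h
    exact Multiset.coe_eq_coe.mp h
  set σ := Tuple.sort f
  set τ := Tuple.sort g
  have h2 : List.Perm (List.ofFn (f ∘ σ)) (List.ofFn (g ∘ τ)) :=
    ((σ.ofFn_comp_perm f).trans hperm).trans (τ.ofFn_comp_perm g).symm
  have heq : f ∘ σ = g ∘ τ := List.ofFn_injective <|
    List.Perm.eq_of_sortedLE
      ((List.sortedLE_ofFn_iff).2 (Tuple.monotone_sort f))
      ((List.sortedLE_ofFn_iff).2 (Tuple.monotone_sort g)) h2
  refine ⟨σ.symm.trans τ, fun j => ?_⟩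
  have := congrFun heq (σ.symm j)
  simpa using this

lemma aux_topk {ι : Type*} [Fintype ι] [DecidableEq ι] (a : ι → ℝ) :
    ∀ k : ℕ, k ≤ Fintype.card ι →
      ∃ S : Finset ι, S.card = k ∧ ∀ i ∈ S, ∀ j, j ∉ S → a j ≤ a i := by
  intro k
  induction k with
  | zero => exact fun _ => ⟨∅, rfl, by simp⟩
  | succ k ih =>
    intro hk
    obtain ⟨S, hcard, hmax⟩ := ih (Nat.le_of_succ_le hk)
    have hne : (Sᶜ : Finset ι).Nonempty := by
      rw [← Finset.card_pos, Finset.card_compl, hcard]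
      omega
    obtain ⟨j0, hj0, hj0max⟩ := Finset.exists_max_image (Sᶜ) a hne
    have hj0S : j0 ∉ S := Finset.mem_compl.mp hj0
    refine ⟨insert j0 S, ?_, ?_⟩
    · rw [Finset.card_insert_of_notMem hj0S, hcard]
    · intro i hi j hj
      have hjS : j ∉ S := fun hjS => hj (Finset.mem_insert_of_mem hjS)
      rcases Finset.mem_insert.mp hi with rfl | hiS
      · exact hj0max j (Finset.mem_compl.mpr hjS)
      · exact hmax i hiS j hjS

lemma aux_weight {ι : Type*} [Fintype ι] [DecidableEq ι] (a c : ι → ℝ)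
    (ha : ∀ i, 0 ≤ a i) (hc0 : ∀ i, 0 ≤ c i) (hc1 : ∀ i, c i ≤ 1)
    (S : Finset ι) (hsum : ∑ i, c i = S.card)
    (hmax : ∀ i ∈ S, ∀ j, j ∉ S → a j ≤ a i) :
    ∑ i, c i * a i ≤ ∑ i ∈ S, a i := by
  by_cases hS : S.Nonempty
  · obtain ⟨i0, hi0, hi0min⟩ := Finset.exists_min_image S a hS
    set t := a i0 with ht
    set d : ι → ℝ := fun i => if i ∈ S then (1 : ℝ) else 0 with hd
    have hdsum : ∑ i, d i = S.card := by
      simp [hd, Finset.sum_ite_mem]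
    have hda : ∑ i, d i * a i = ∑ i ∈ S, a i := by
      simp only [hd, ite_mul, one_mul, zero_mul]
      rw [Finset.sum_ite_mem, Finset.univ_inter]
    have expand : ∑ i, c i * a i =
        (∑ i, (c i - d i) * (a i - t)) + (∑ i, d i * a i) + t * ((∑ i, c i) - ∑ i, d i) :=
      calc ∑ i, c i * a i
          = ∑ i, ((c i - d i) * (a i - t) + d i * a i + t * (c i - d i)) :=
            Finset.sum_congr rfl fun i _ => by ring
        _ = _ := by
            rw [Finset.sum_add_distrib, Finset.sum_add_distrib, ← Finset.mul_sum,
              Finset.sum_sub_distrib]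
    rw [expand, hdsum, hsum, hda]
    have hnonpos : ∑ i, (c i - d i) * (a i - t) ≤ 0 := by
      apply Finset.sum_nonpos
      intro i _
      by_cases hiS : i ∈ S
      · simp only [hd, hiS, if_true]
        nlinarith [hc1 i, hi0min i hiS]
      · simp only [hd, hiS, if_false]
        nlinarith [hc0 i, hmax i0 hi0 i hiS]
    linarith
  · rw [Finset.not_nonempty_iff_eq_empty] at hS
    subst hS
    simp only [Finset.card_empty, Nat.cast_zero] at hsum
    have h0 : ∀ i ∈ Finset.univ, c i = 0 :=
      (Finset.sum_eq_zero_iff_of_nonneg (fun i _ => hc0 i)).mp hsum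
    have hz : ∑ i, c i * a i = 0 :=
      Finset.sum_eq_zero fun i hi => by rw [h0 i hi, zero_mul]
    simp [hz]

lemma aux_diag {n : Type*} [Fintype n] [DecidableEq n] (U₁ U₂ : Matrix n n ℂ) (d₁ d₂ : n → ℂ)
    (h1 : star U₁ * U₁ = 1) (h2 : star U₂ * U₂ = 1)
    (heq : U₁ * Matrix.diagonal d₁ * star U₁ = U₂ * Matrix.diagonal d₂ * star U₂) :
    Multiset.map d₁ Finset.univ.val = Multiset.map d₂ Finset.univ.val := by
  have key : ∀ (U : Matrix n n ℂ), star U * U = 1 → ∀ (d : n → ℂ) (x : ℂ),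
      (x • (1 : Matrix n n ℂ) - U * Matrix.diagonal d * star U).det = ∏ i, (x - d i) := by
    intro U hU d x
    have hU' : U * star U = 1 := mul_eq_one_comm.mp hU
    have hdet : (star U).det * U.det = 1 := by
      rw [← Matrix.det_mul, hU, Matrix.det_one]
    have hsplit : x • (1 : Matrix n n ℂ) - U * Matrix.diagonal d * star U
        = U * (x • (1 : Matrix n n ℂ) - Matrix.diagonal d) * star U := by
      rw [Matrix.mul_sub, Matrix.sub_mul]
      congr 1
      rw [Matrix.mul_smul, Matrix.mul_one, Matrix.smul_mul, hU']
    have hd : x • (1 : Matrix n n ℂ) - Matrix.diagonal d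
        = Matrix.diagonal (fun i => x - d i) := by
      rw [Matrix.smul_one_eq_diagonal, Matrix.diagonal_sub]
    rw [hsplit, Matrix.det_mul, Matrix.det_mul, hd, Matrix.det_diagonal]
    linear_combination (∏ i, (x - d i)) * hdet
  have hx : ∀ x : ℂ, ∏ i, (x - d₁ i) = ∏ i, (x - d₂ i) := fun x => by
    rw [← key U₁ h1 d₁ x, ← key U₂ h2 d₂ x, heq]
  have hp : (∏ i, (X - C (d₁ i)) : ℂ[X]) = ∏ i, (X - C (d₂ i)) := by
    apply Polynomial.funext
    intro r
    simp only [eval_prod, eval_sub, eval_X, eval_C]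
    exact hx r
  have hform : ∀ d : n → ℂ,
      ((Finset.univ.val.map d).map (fun a => X - C a)).prod = ∏ i, (X - C (d i)) := by
    intro d
    rw [Multiset.map_map, Finset.prod_eq_multiset_prod]
    rfl
  calc Multiset.map d₁ Finset.univ.val
      = ((Finset.univ.val.map d₁).map (fun a => X - C a)).prod.roots :=
        (roots_multiset_prod_X_sub_C _).symm
    _ = ((Finset.univ.val.map d₂).map (fun a => X - C a)).prod.roots := by
        rw [hform, hform, hp]
    _ = Multiset.map d₂ Finset.univ.val := roots_multiset_prod_X_sub_C _

lemma sv_abs {m : ℕ} {A : Matrix (Fin m) (Fin m) ℂ} (hA : A.IsHermitian) :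
    ∃ e : Equiv.Perm (Fin m), ∀ j, sv A j = |hA.eigenvalues (e j)| := by
  have hB : (Aᴴ * A).IsHermitian := Matrix.isHermitian_conjTranspose_mul_self A
  set U₁ : Matrix (Fin m) (Fin m) ℂ := (hA.eigenvectorUnitary : Matrix (Fin m) (Fin m) ℂ)
  set U₂ : Matrix (Fin m) (Fin m) ℂ := (hB.eigenvectorUnitary : Matrix (Fin m) (Fin m) ℂ)
  have hu1 : star U₁ * U₁ = 1 := Unitary.coe_star_mul_self hA.eigenvectorUnitary
  have hu2 : star U₂ * U₂ = 1 := Unitary.coe_star_mul_self hB.eigenvectorUnitary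
  have hAA : U₁ * Matrix.diagonal (fun j => ((hA.eigenvalues j : ℂ) * (hA.eigenvalues j : ℂ)))
      * star U₁ = U₂ * Matrix.diagonal (RCLike.ofReal ∘ hB.eigenvalues) * star U₂ := by
    have hsb := hB.spectral_theorem
    simp only [Unitary.conjStarAlgAut_apply, Unitary.coe_star] at hsb
    rw [← hsb]
    have hsa := hA.spectral_theorem
    simp only [Unitary.conjStarAlgAut_apply, Unitary.coe_star] at hsa
    calc U₁ * Matrix.diagonal (fun j => ((hA.eigenvalues j : ℂ) * (hA.eigenvalues j : ℂ)))
          * star U₁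
        = (U₁ * Matrix.diagonal (RCLike.ofReal ∘ hA.eigenvalues) * star U₁)
          * (U₁ * Matrix.diagonal (RCLike.ofReal ∘ hA.eigenvalues) * star U₁) := by
          rw [Matrix.mul_assoc, Matrix.mul_assoc, Matrix.mul_assoc]
          congr 1
          rw [← Matrix.mul_assoc (star U₁), ← Matrix.mul_assoc (star U₁), hu1, Matrix.one_mul,
            ← Matrix.mul_assoc, Matrix.diagonal_mul_diagonal]
          rfl
      _ = Aᴴ * A := by rw [← hsa, hA]
  have hmul := aux_diag U₁ U₂ _ _ hu1 hu2 hAA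
  have hreal : Multiset.map (fun j => hA.eigenvalues j * hA.eigenvalues j) Finset.univ.val
      = Multiset.map hB.eigenvalues Finset.univ.val := by
    apply Multiset.map_injective Complex.ofReal_injective
    rw [Multiset.map_map, Multiset.map_map]
    have e1 : (Complex.ofReal ∘ fun j => hA.eigenvalues j * hA.eigenvalues j)
        = (fun j => ((hA.eigenvalues j : ℂ)) * ((hA.eigenvalues j : ℂ))) := by
      funext j; simp
    have e2 : (Complex.ofReal ∘ hB.eigenvalues)
        = (RCLike.ofReal ∘ hB.eigenvalues : Fin m → ℂ) := rfl
    rw [e1, e2]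
    exact hmul
  have hsqrt : Multiset.map (fun j => sv A j) Finset.univ.val
      = Multiset.map (fun j => |hA.eigenvalues j|) Finset.univ.val := by
    have := congrArg (Multiset.map Real.sqrt) hreal
    rw [Multiset.map_map, Multiset.map_map] at this
    calc Multiset.map (fun j => sv A j) Finset.univ.val
        = Multiset.map (Real.sqrt ∘ hB.eigenvalues) Finset.univ.val := rfl
      _ = Multiset.map (Real.sqrt ∘ fun j => hA.eigenvalues j * hA.eigenvalues j)
          Finset.univ.val := this.symm
      _ = Multiset.map (fun j => |hA.eigenvalues j|) Finset.univ.val := by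
          congr 1
          funext j
          exact Real.sqrt_mul_self_eq_abs _
  exact aux_perm_of_multiset hsqrt

lemma quad_form {m : ℕ} {A : Matrix (Fin m) (Fin m) ℂ} (hA : A.IsHermitian) (x : Fin m → ℂ) :
    dotProduct (star x) (A *ᵥ x) =
      ((∑ l, hA.eigenvalues l *
        Complex.normSq ((star (hA.eigenvectorUnitary : Matrix (Fin m) (Fin m) ℂ) *ᵥ x) l) : ℝ)
        : ℂ) := by
  set U : Matrix (Fin m) (Fin m) ℂ := (hA.eigenvectorUnitary : Matrix (Fin m) (Fin m) ℂ) with hU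
  set z : Fin m → ℂ := star U *ᵥ x with hz
  have hvm : star x ᵥ* U = star z := by
    rw [hz, Matrix.star_mulVec, Matrix.star_eq_conjTranspose, Matrix.conjTranspose_conjTranspose]
  conv_lhs => rw [hA.spectral_theorem, Unitary.conjStarAlgAut_apply]
  rw [← Matrix.mulVec_mulVec, ← Matrix.mulVec_mulVec, dotProduct_mulVec, hvm]
  rw [dotProduct]
  push_cast
  apply Finset.sum_congr rfl
  intro l _
  rw [Matrix.mulVec_diagonal]
  simp only [Pi.star_apply, Complex.star_def, Complex.normSq_eq_conj_mul_self]
  have hco : ((RCLike.ofReal ∘ hA.eigenvalues) l : ℂ) = ((hA.eigenvalues l : ℝ) : ℂ) := rfl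
  rw [hco]
  ring

lemma unit_col {m : ℕ} {A : Matrix (Fin m) (Fin m) ℂ} (hA : A.IsHermitian) (l : Fin m) :
    dotProduct (star (⇑(hA.eigenvectorBasis l))) (A *ᵥ ⇑(hA.eigenvectorBasis l))
      = (hA.eigenvalues l : ℂ) := by
  set x : Fin m → ℂ := ⇑(hA.eigenvectorBasis l) with hx
  have h1 : star (hA.eigenvectorUnitary : Matrix (Fin m) (Fin m) ℂ)
      * (hA.eigenvectorUnitary : Matrix (Fin m) (Fin m) ℂ) = 1 :=
    Unitary.coe_star_mul_self hA.eigenvectorUnitary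
  have hxx : dotProduct (star x) x = 1 := by
    have h2 : (star (hA.eigenvectorUnitary : Matrix (Fin m) (Fin m) ℂ)
        * (hA.eigenvectorUnitary : Matrix (Fin m) (Fin m) ℂ)) l l = 1 := by
      rw [h1, Matrix.one_apply_eq]
    rw [Matrix.mul_apply] at h2
    rw [dotProduct]
    rw [← h2]
    apply Finset.sum_congr rfl
    intro r _
    rw [Matrix.star_apply, Matrix.IsHermitian.eigenvectorUnitary_apply]
    rfl
  rw [hA.mulVec_eigenvectorBasis, dotProduct_smul, hxx]
  simp

lemma unitary_col_sum {n : Type*} [Fintype n] [DecidableEq n] {W : Matrix n n ℂ}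
    (h : star W * W = 1) (c : n) : ∑ l, Complex.normSq (W l c) = 1 := by
  have h2 : (star W * W) c c = 1 := by rw [h, Matrix.one_apply_eq]
  rw [Matrix.mul_apply] at h2
  have h3 : (((∑ l, Complex.normSq (W l c)) : ℝ) : ℂ) = 1 := by
    rw [← h2]
    push_cast
    apply Finset.sum_congr rfl
    intro l _
    rw [Matrix.star_apply, Complex.star_def, Complex.normSq_eq_conj_mul_self]
  exact_mod_cast h3

lemma unitary_row_sum {n : Type*} [Fintype n] [DecidableEq n] {W : Matrix n n ℂ}
    (h : star W * W = 1) (l : n) : ∑ c, Complex.normSq (W l c) = 1 := by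
  have h' : W * star W = 1 := mul_eq_one_comm.mp h
  have h2 : (W * star W) l l = 1 := by rw [h', Matrix.one_apply_eq]
  rw [Matrix.mul_apply] at h2
  have h3 : (((∑ c, Complex.normSq (W l c)) : ℝ) : ℂ) = 1 := by
    rw [← h2]
    push_cast
    apply Finset.sum_congr rfl
    intro c _
    rw [Matrix.star_apply, Complex.star_def, Complex.normSq_eq_conj_mul_self]
    ring
  exact_mod_cast h3

lemma unitary_staru_v {n : Type*} [Fintype n] [DecidableEq n] {U V : Matrix n n ℂ}
    (hU : star U * U = 1) (hV : star V * V = 1) : star (star U * V) * (star U * V) = 1 := by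
  have hU' : U * star U = 1 := mul_eq_one_comm.mp hU
  rw [Matrix.star_mul, star_star]
  calc star V * U * (star U * V) = star V * (U * star U) * V := by
        rw [Matrix.mul_assoc, Matrix.mul_assoc, Matrix.mul_assoc]
    _ = 1 := by rw [hU', Matrix.mul_one, hV]

lemma aux_row_bound {α : Type*} [DecidableEq α] {m : ℕ} {M : Matrix (Fin m) (Fin m) ℂ}
    (hM : star M * M = 1) (l' : Fin m) (s : Finset α) (φ : α → Fin m)
    (hinj : ∀ x ∈ s, ∀ y ∈ s, φ x = φ y → x = y) :
    ∑ q ∈ s, Complex.normSq (M l' (φ q)) ≤ 1 := by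
  have key : ∑ q ∈ s, Complex.normSq (M l' (φ q))
      = ∑ c ∈ s.image φ, Complex.normSq (M l' c) :=
    (Finset.sum_image (f := fun c => Complex.normSq (M l' c)) hinj).symm
  rw [key]
  calc ∑ c ∈ s.image φ, Complex.normSq (M l' c) ≤ ∑ c, Complex.normSq (M l' c) :=
      Finset.sum_le_sum_of_subset_of_nonneg (Finset.subset_univ _)
        (fun c _ _ => Complex.normSq_nonneg _)
    _ = 1 := unitary_row_sum hM l'

lemma half {m p : ℕ} (a s : Fin p × Fin m → ℝ) (ha : ∀ q, 0 ≤ a q)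
    (f : Fin p → Equiv.Perm (Fin m)) (hfs : ∀ i l, a (i, l) = s (i, f i l))
    (T : Finset (Fin p × Fin m)) (w : Fin p × Fin m → Fin m → ℝ)
    (hw0 : ∀ q l', 0 ≤ w q l') (hw1 : ∀ q ∈ T, ∑ l', w q l' = 1)
    (hrow : ∀ i l', ∑ q ∈ T.filter (fun q => q.1 = i), w q l' ≤ 1) :
    ∑ q ∈ T, ∑ l', a (q.1, l') * w q l' ≤
      sSup {r : ℝ | ∃ T' : Finset (Fin p × Fin m),
        T'.card = T.card ∧ r = ∑ q ∈ T', s q} := by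
  classical
  set c : Fin p × Fin m → ℝ := fun il => ∑ q ∈ T.filter (fun q => q.1 = il.1), w q il.2 with hc
  have hfiber : ∀ (F : (Fin p × Fin m) → ℝ),
      ∑ q ∈ T, F q = ∑ i, ∑ q ∈ T.filter (fun q => q.1 = i), F q :=
    fun F => (Finset.sum_fiberwise T (fun q => q.1) F).symm
  have hL : ∑ q ∈ T, ∑ l', a (q.1, l') * w q l' = ∑ il, c il * a il := by
    rw [hfiber]
    rw [Fintype.sum_prod_type]
    apply Finset.sum_congr rfl
    intro i _
    rw [Finset.sum_comm]
    apply Finset.sum_congr rfl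
    intro l' _
    rw [hc, Finset.sum_mul]
    apply Finset.sum_congr rfl
    intro q hq
    have : q.1 = i := (Finset.mem_filter.mp hq).2
    rw [this]
    ring
  have hcsum : ∑ il, c il = (T.card : ℝ) := by
    rw [Fintype.sum_prod_type]
    have : ∀ i : Fin p, ∑ l', c (i, l')
        = ∑ q ∈ T.filter (fun q => q.1 = i), (1 : ℝ) := by
      intro i
      simp only [hc]
      rw [Finset.sum_comm (s := Finset.univ) (t := T.filter (fun q => q.1 = i))
        (f := fun l' q => w q l')]
      apply Finset.sum_congr rfl
      intro q hq
      exact hw1 q (Finset.mem_filter.mp hq).1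
    rw [Finset.sum_congr rfl fun i _ => this i]
    simp only [Finset.sum_const, nsmul_eq_mul, mul_one]
    rw [← Nat.cast_sum]
    congr 1
    exact (Finset.card_eq_sum_card_fiberwise (fun q _ => Finset.mem_univ q.1)).symm
  have hc0 : ∀ il, 0 ≤ c il := fun il => Finset.sum_nonneg fun q _ => hw0 q il.2
  have hc1 : ∀ il, c il ≤ 1 := fun il => hrow il.1 il.2
  obtain ⟨S, hScard, hSmax⟩ := aux_topk a T.card
    (le_trans (Finset.card_le_univ T) (le_of_eq (Finset.card_univ)))
  have hweight : ∑ il, c il * a il ≤ ∑ il ∈ S, a il :=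
    aux_weight a c ha hc0 hc1 S (by rw [hcsum, hScard]) hSmax
  set Φ : Fin p × Fin m → Fin p × Fin m := fun il => (il.1, f il.1 il.2) with hΦ
  have hinj : Function.Injective Φ := by
    rintro ⟨i, l⟩ ⟨i', l'⟩ h
    simp only [hΦ, Prod.mk.injEq] at h
    obtain ⟨rfl, h2⟩ := h
    exact Prod.ext rfl ((f i).injective h2)
  have hsum' : ∑ q ∈ S.image Φ, s q = ∑ il ∈ S, a il := by
    rw [Finset.sum_image fun x _ y _ h => hinj h]
    exact Finset.sum_congr rfl fun il _ => (hfs il.1 il.2).symm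
  have hmem : (∑ il ∈ S, a il) ∈ {r : ℝ | ∃ T' : Finset (Fin p × Fin m),
      T'.card = T.card ∧ r = ∑ q ∈ T', s q} :=
    ⟨S.image Φ, by rw [Finset.card_image_of_injective _ hinj, hScard], hsum'.symm⟩
  have hbdd : BddAbove {r : ℝ | ∃ T' : Finset (Fin p × Fin m),
      T'.card = T.card ∧ r = ∑ q ∈ T', s q} := by
    apply Set.Finite.bddAbove
    have hsub : {r : ℝ | ∃ T' : Finset (Fin p × Fin m),
        T'.card = T.card ∧ r = ∑ q ∈ T', s q} ⊆
        Set.range (fun T' : Finset (Fin p × Fin m) => ∑ q ∈ T', s q) := by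
      rintro r ⟨T', _, rfl⟩
      exact ⟨T', rfl⟩
    exact Set.Finite.subset (Set.finite_range _) hsub
  calc ∑ q ∈ T, ∑ l', a (q.1, l') * w q l' = ∑ il, c il * a il := hL
    _ ≤ ∑ il ∈ S, a il := hweight
    _ ≤ _ := le_csSup hbdd hmem

end AuxLemmas

open Matrix in
set_option maxHeartbeats 1000000 in
/-- weak majorization of T-singular values for sums.  Represent
symmetric T-product tensors `C, D ∈ R^{m×m×p}` by their Hermitian DFT blocks
`C i, D i`; the T-singular values are the singular values of all the blocks
taken together (indexed by `Fin p × Fin m`).  Weak majorization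
`σ(C+D) ≺_w σ(C) + σ(D)` says: for every `k`-element index set, the sum of the
corresponding singular values of `C+D` is at most the sum of the `k` largest
singular values of `C` (the supremum over `k`-element index sets) plus that of
`D`. -/
theorem tsingular_weak_majorization_sum {m p : ℕ}
    (C D : Fin p → Matrix (Fin m) (Fin m) ℂ)
    (hC : ∀ i, (C i).IsHermitian) (hD : ∀ i, (D i).IsHermitian) :
    ∀ T : Finset (Fin p × Fin m),
      ∑ q ∈ T, sv (C q.1 + D q.1) q.2 ≤
        sSup {r : ℝ | ∃ T' : Finset (Fin p × Fin m),
          T'.card = T.card ∧ r = ∑ q ∈ T', sv (C q.1) q.2} +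
        sSup {r : ℝ | ∃ T' : Finset (Fin p × Fin m),
          T'.card = T.card ∧ r = ∑ q ∈ T', sv (D q.1) q.2} := by
  intro T
  classical
  have hE : ∀ i, (C i + D i).IsHermitian := fun i => (hC i).add (hD i)
  choose e he using fun i => sv_abs (hE i)
  choose fC hfC using fun i => sv_abs (hC i)
  choose fD hfD using fun i => sv_abs (hD i)
  -- unitary matrices
  have hVu : ∀ i, star ((hE i).eigenvectorUnitary : Matrix (Fin m) (Fin m) ℂ)
      * ((hE i).eigenvectorUnitary : Matrix (Fin m) (Fin m) ℂ) = 1 :=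
    fun i => Unitary.coe_star_mul_self _
  have hUCu : ∀ i, star ((hC i).eigenvectorUnitary : Matrix (Fin m) (Fin m) ℂ)
      * ((hC i).eigenvectorUnitary : Matrix (Fin m) (Fin m) ℂ) = 1 :=
    fun i => Unitary.coe_star_mul_self _
  have hUDu : ∀ i, star ((hD i).eigenvectorUnitary : Matrix (Fin m) (Fin m) ℂ)
      * ((hD i).eigenvectorUnitary : Matrix (Fin m) (Fin m) ℂ) = 1 :=
    fun i => Unitary.coe_star_mul_self _
  -- the weight functions
  set wc : (Fin p × Fin m) → Fin m → ℝ := fun q l' => Complex.normSq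
    ((star ((hC q.1).eigenvectorUnitary : Matrix (Fin m) (Fin m) ℂ)
      * ((hE q.1).eigenvectorUnitary : Matrix (Fin m) (Fin m) ℂ)) l' (e q.1 q.2)) with hwc
  set wd : (Fin p × Fin m) → Fin m → ℝ := fun q l' => Complex.normSq
    ((star ((hD q.1).eigenvectorUnitary : Matrix (Fin m) (Fin m) ℂ)
      * ((hE q.1).eigenvectorUnitary : Matrix (Fin m) (Fin m) ℂ)) l' (e q.1 q.2)) with hwd
  have hWCu : ∀ i, star (star ((hC i).eigenvectorUnitary : Matrix (Fin m) (Fin m) ℂ)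
      * ((hE i).eigenvectorUnitary : Matrix (Fin m) (Fin m) ℂ))
      * (star ((hC i).eigenvectorUnitary : Matrix (Fin m) (Fin m) ℂ)
      * ((hE i).eigenvectorUnitary : Matrix (Fin m) (Fin m) ℂ)) = 1 :=
    fun i => unitary_staru_v (hUCu i) (hVu i)
  have hWDu : ∀ i, star (star ((hD i).eigenvectorUnitary : Matrix (Fin m) (Fin m) ℂ)
      * ((hE i).eigenvectorUnitary : Matrix (Fin m) (Fin m) ℂ))
      * (star ((hD i).eigenvectorUnitary : Matrix (Fin m) (Fin m) ℂ)
      * ((hE i).eigenvectorUnitary : Matrix (Fin m) (Fin m) ℂ)) = 1 :=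
    fun i => unitary_staru_v (hUDu i) (hVu i)
  -- pointwise bound
  have hpt : ∀ q : Fin p × Fin m, sv (C q.1 + D q.1) q.2 ≤
      (∑ l', |(hC q.1).eigenvalues l'| * wc q l')
      + (∑ l', |(hD q.1).eigenvalues l'| * wd q l') := by
    rintro ⟨i, j⟩
    set x : Fin m → ℂ := ⇑((hE i).eigenvectorBasis (e i j)) with hx
    have hxz : ∀ (U : Matrix (Fin m) (Fin m) ℂ) (l' : Fin m),
        (star U *ᵥ x) l'
          = (star U * ((hE i).eigenvectorUnitary : Matrix (Fin m) (Fin m) ℂ)) l' (e i j) := by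
      intro U l'
      rw [Matrix.mulVec, dotProduct, Matrix.mul_apply]
      apply Finset.sum_congr rfl
      intro r _
      congr 1
    have hkey : (hE i).eigenvalues (e i j) =
        (∑ l', (hC i).eigenvalues l' * wc (i, j) l')
        + (∑ l', (hD i).eigenvalues l' * wd (i, j) l') := by
      have h1 : ((hE i).eigenvalues (e i j) : ℂ)
          = dotProduct (star x) ((C i + D i) *ᵥ x) := (unit_col (hE i) (e i j)).symm
      rw [Matrix.add_mulVec, dotProduct_add, quad_form (hC i) x,
        quad_form (hD i) x] at h1
      have h2 : ∀ l', Complex.normSq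
          ((star ((hC i).eigenvectorUnitary : Matrix (Fin m) (Fin m) ℂ) *ᵥ x) l')
          = wc (i, j) l' := fun l' => by rw [hxz]
      have h3 : ∀ l', Complex.normSq
          ((star ((hD i).eigenvectorUnitary : Matrix (Fin m) (Fin m) ℂ) *ᵥ x) l')
          = wd (i, j) l' := fun l' => by rw [hxz]
      simp only [h2, h3] at h1
      exact_mod_cast h1
    have habs : ∀ (v : Fin m → ℝ) (w : Fin m → ℝ), (∀ l', 0 ≤ w l') →
        |∑ l', v l' * w l'| ≤ ∑ l', |v l'| * w l' := by
      intro v w hw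
      refine le_trans (Finset.abs_sum_le_sum_abs _ _) ?_
      apply Finset.sum_le_sum
      intro l' _
      rw [abs_mul, abs_of_nonneg (hw l')]
    calc sv (C i + D i) j = |(hE i).eigenvalues (e i j)| := he i j
      _ ≤ |∑ l', (hC i).eigenvalues l' * wc (i, j) l'|
          + |∑ l', (hD i).eigenvalues l' * wd (i, j) l'| := by
          rw [hkey]; exact abs_add_le _ _
      _ ≤ _ := add_le_add
          (habs _ _ fun l' => Complex.normSq_nonneg _)
          (habs _ _ fun l' => Complex.normSq_nonneg _)
  have hsplit : ∑ q ∈ T, sv (C q.1 + D q.1) q.2 ≤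
      (∑ q ∈ T, ∑ l', |(hC q.1).eigenvalues l'| * wc q l')
      + (∑ q ∈ T, ∑ l', |(hD q.1).eigenvalues l'| * wd q l') := by
    rw [← Finset.sum_add_distrib]
    exact Finset.sum_le_sum fun q _ => hpt q
  refine le_trans hsplit (add_le_add ?_ ?_)
  · refine half (fun q => |(hC q.1).eigenvalues q.2|) (fun q => sv (C q.1) q.2)
      (fun q => abs_nonneg _) (fun i => (fC i)⁻¹) ?_ T wc
      (fun q l' => Complex.normSq_nonneg _)
      (fun q _ => unitary_col_sum (hWCu q.1) (e q.1 q.2)) ?_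
    · intro i l
      have := hfC i ((fC i)⁻¹ l)
      simp only [Equiv.Perm.inv_def, Equiv.apply_symm_apply] at this
      exact this.symm
    · intro i l'
      have hrw : ∑ q ∈ T.filter (fun q => q.1 = i), wc q l'
          = ∑ q ∈ T.filter (fun q => q.1 = i), Complex.normSq
            ((star ((hC i).eigenvectorUnitary : Matrix (Fin m) (Fin m) ℂ)
              * ((hE i).eigenvectorUnitary : Matrix (Fin m) (Fin m) ℂ)) l' (e i q.2)) := by
        apply Finset.sum_congr rfl
        intro q hq
        have hq1 : q.1 = i := (Finset.mem_filter.mp hq).2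
        rw [hwc]
        simp only [hq1]
      rw [hrw]
      have hinj : ∀ q1 ∈ T.filter (fun q => q.1 = i), ∀ q2 ∈ T.filter (fun q => q.1 = i),
          e i q1.2 = e i q2.2 → q1 = q2 := by
        intro q1 hq1 q2 hq2 h
        have h1 : q1.1 = i := (Finset.mem_filter.mp hq1).2
        have h2 : q2.1 = i := (Finset.mem_filter.mp hq2).2
        have := (e i).injective h
        exact Prod.ext (h1.trans h2.symm) this
      exact aux_row_bound
        (M := star ((hC i).eigenvectorUnitary : Matrix (Fin m) (Fin m) ℂ)
          * ((hE i).eigenvectorUnitary : Matrix (Fin m) (Fin m) ℂ))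
        (hWCu i) l' (T.filter (fun q => q.1 = i)) (fun q => e i q.2) hinj
  · refine half (fun q => |(hD q.1).eigenvalues q.2|) (fun q => sv (D q.1) q.2)
      (fun q => abs_nonneg _) (fun i => (fD i)⁻¹) ?_ T wd
      (fun q l' => Complex.normSq_nonneg _)
      (fun q _ => unitary_col_sum (hWDu q.1) (e q.1 q.2)) ?_
    · intro i l
      have := hfD i ((fD i)⁻¹ l)
      simp only [Equiv.Perm.inv_def, Equiv.apply_symm_apply] at this
      exact this.symm
    · intro i l'
      have hrw : ∑ q ∈ T.filter (fun q => q.1 = i), wd q l'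
          = ∑ q ∈ T.filter (fun q => q.1 = i), Complex.normSq
            ((star ((hD i).eigenvectorUnitary : Matrix (Fin m) (Fin m) ℂ)
              * ((hE i).eigenvectorUnitary : Matrix (Fin m) (Fin m) ℂ)) l' (e i q.2)) := by
        apply Finset.sum_congr rfl
        intro q hq
        have hq1 : q.1 = i := (Finset.mem_filter.mp hq).2
        rw [hwd]
        simp only [hq1]
      rw [hrw]
      have hinj : ∀ q1 ∈ T.filter (fun q => q.1 = i), ∀ q2 ∈ T.filter (fun q => q.1 = i),
          e i q1.2 = e i q2.2 → q1 = q2 := by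
        intro q1 hq1 q2 hq2 h
        have h1 : q1.1 = i := (Finset.mem_filter.mp hq1).2
        have h2 : q2.1 = i := (Finset.mem_filter.mp hq2).2
        have := (e i).injective h
        exact Prod.ext (h1.trans h2.symm) this
      exact aux_row_bound
        (M := star ((hD i).eigenvectorUnitary : Matrix (Fin m) (Fin m) ℂ)
          * ((hE i).eigenvectorUnitary : Matrix (Fin m) (Fin m) ℂ))
        (hWDu i) l' (T.filter (fun q => q.1 = i)) (fun q => e i q.2) hinj
end

section
/- Ky Fan k-norm Hölder-type inequality for products: Let C_1,...,C_m be symmetric T-product tensors in R^{m×m×p}, s ≥ 1, and p_1,...,p_m > 0 with Σ 1/p_i = 1. Then for every k, ‖|Π_{i=1}^m C_i|^s‖_{(k)} ≤ Π_{i=1}^m (‖|C_i|^{s p_i}‖_{(k)})^{1/p_i} ≤ Σ_{i=1}^m ‖|C_i|^{s p_i}‖_{(k)} / p_i. -/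
open scoped BigOperators

/-- The T-singular values of a T-product tensor represented by its DFT blocks,
indexed over all blocks simultaneously. -/
noncomputable def svB {m p : ℕ} (X : Fin p → Matrix (Fin m) (Fin m) ℂ)
    (q : Fin p × Fin m) : ℝ := sv (X q.1) q.2

/-- `‖|H|^e‖_{(k)}`: the sum of the `k` largest values among the `e`-th powers of
the T-singular values of `H` (as the supremum over `k`-element index sets). -/
noncomputable def kyFanPow {m p : ℕ} (X : Fin p → Matrix (Fin m) (Fin m) ℂ)
    (e : ℝ) (k : ℕ) : ℝ :=
  sSup {r : ℝ | ∃ T : Finset (Fin p × Fin m),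
    T.card = k ∧ r = ∑ q ∈ T, svB X q ^ e}

open Finset

set_option linter.unusedSectionVars false
set_option linter.unusedVariables false
set_option maxHeartbeats 1000000

section AuxKF

section KFan

variable {ι : Type*} [Fintype ι]

/-- max over `k`-subsets of the sum. -/
noncomputable def kfan (v : ι → ℝ) (k : ℕ) : ℝ :=
  sSup {r : ℝ | ∃ T : Finset ι, T.card = k ∧ r = ∑ q ∈ T, v q}

/-- max over `k`-subsets of the product. -/
noncomputable def kprod (v : ι → ℝ) (k : ℕ) : ℝ :=
  sSup {r : ℝ | ∃ T : Finset ι, T.card = k ∧ r = ∏ q ∈ T, v q}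

lemma kfan_setFin (F : Finset ι → ℝ) (k : ℕ) :
    {r : ℝ | ∃ T : Finset ι, T.card = k ∧ r = F T}.Finite := by
  have h : {r : ℝ | ∃ T : Finset ι, T.card = k ∧ r = F T} ⊆ F '' Set.univ := by
    rintro r ⟨T, _, rfl⟩; exact ⟨T, trivial, rfl⟩
  exact (Set.finite_univ.image F).subset h

lemma le_kfan {v : ι → ℝ} {k : ℕ} {T : Finset ι} (hT : T.card = k) :
    ∑ q ∈ T, v q ≤ kfan v k :=
  le_csSup (kfan_setFin _ k).bddAbove ⟨T, hT, rfl⟩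

lemma le_kprod {v : ι → ℝ} {k : ℕ} {T : Finset ι} (hT : T.card = k) :
    ∏ q ∈ T, v q ≤ kprod v k :=
  le_csSup (kfan_setFin _ k).bddAbove ⟨T, hT, rfl⟩

lemma kfan_nonneg {v : ι → ℝ} (hv : ∀ q, 0 ≤ v q) (k : ℕ) : 0 ≤ kfan v k :=
  Real.sSup_nonneg (by rintro r ⟨T, _, rfl⟩; exact Finset.sum_nonneg fun q _ => hv q)

lemma kprod_nonneg {v : ι → ℝ} (hv : ∀ q, 0 ≤ v q) (k : ℕ) : 0 ≤ kprod v k :=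
  Real.sSup_nonneg (by rintro r ⟨T, _, rfl⟩; exact Finset.prod_nonneg fun q _ => hv q)

lemma kfan_le {v : ι → ℝ} {k : ℕ} {a : ℝ}
    (h : ∀ T : Finset ι, T.card = k → ∑ q ∈ T, v q ≤ a) (ha : 0 ≤ a) : kfan v k ≤ a :=
  Real.sSup_le (by rintro r ⟨T, hT, rfl⟩; exact h T hT) ha

lemma kprod_le {v : ι → ℝ} {k : ℕ} {a : ℝ}
    (h : ∀ T : Finset ι, T.card = k → ∏ q ∈ T, v q ≤ a) (ha : 0 ≤ a) : kprod v k ≤ a :=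
  Real.sSup_le (by rintro r ⟨T, hT, rfl⟩; exact h T hT) ha

lemma kprod_attain (v : ι → ℝ) {k : ℕ} (hk : k ≤ Fintype.card ι) :
    ∃ T : Finset ι, T.card = k ∧ kprod v k = ∏ q ∈ T, v q := by
  have hne : {r : ℝ | ∃ T : Finset ι, T.card = k ∧ r = ∏ q ∈ T, v q}.Nonempty := by
    obtain ⟨T, -, hT⟩ := Finset.exists_subset_card_eq
      (s := (univ : Finset ι)) (n := k) (by simpa using hk)
    exact ⟨_, T, hT, rfl⟩
  exact hne.csSup_mem (kfan_setFin _ k)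

lemma kfan_comp_equiv (v : ι → ℝ) (π : ι ≃ ι) (k : ℕ) :
    kfan (fun q => v (π q)) k = kfan v k := by
  unfold kfan
  congr 1
  ext r
  constructor
  · rintro ⟨T, hT, rfl⟩
    refine ⟨T.map π.toEmbedding, by rwa [Finset.card_map], ?_⟩
    rw [Finset.sum_map]
    rfl
  · rintro ⟨T, hT, rfl⟩
    refine ⟨T.map π.symm.toEmbedding, by rwa [Finset.card_map], ?_⟩
    rw [Finset.sum_map]
    simp

end KFan

section Sorting

/-- decreasing rearrangement of a tuple -/
noncomputable def dsort {n : ℕ} (v : Fin n → ℝ) : Fin n → ℝ :=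
  fun j => v (Tuple.sort v (j.rev))

/-- the permutation realizing `dsort` -/
noncomputable def dsortPerm {n : ℕ} (v : Fin n → ℝ) : Equiv.Perm (Fin n) :=
  (Fin.revPerm : Equiv.Perm (Fin n)).trans (Tuple.sort v)

lemma dsort_eq {n : ℕ} (v : Fin n → ℝ) (j : Fin n) : dsort v j = v (dsortPerm v j) := rfl

lemma dsort_antitone {n : ℕ} (v : Fin n → ℝ) : Antitone (dsort v) := by
  intro a b hab
  exact Tuple.monotone_sort v (show b.rev ≤ a.rev from (Fin.rev_le_rev).mpr hab)

lemma strictMono_val_le {l n : ℕ} {f : Fin l → Fin n} (hf : StrictMono f) (i : Fin l) :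
    (i : ℕ) ≤ (f i : ℕ) := by
  suffices h : ∀ t : ℕ, ∀ i : Fin l, (i : ℕ) = t → t ≤ (f i : ℕ) from h _ i rfl
  intro t
  induction t with
  | zero => intro i _; exact Nat.zero_le _
  | succ t ih =>
    intro i hi
    have hl : t < l := by omega
    have hj : (⟨t, hl⟩ : Fin l) < i := by
      rw [Fin.lt_def]; simp; omega
    have h2 := hf hj
    have h3 := ih ⟨t, hl⟩ rfl
    rw [Fin.lt_def] at h2
    omega

/-- product over any `l`-subset of an antitone nonneg tuple is at most the product of
the first `l` entries. -/
lemma prod_le_top {n l : ℕ} (v : Fin n → ℝ) (hva : Antitone v) (hv0 : ∀ j, 0 ≤ v j)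
    (B : Finset (Fin n)) (hB : B.card = l) (hl : l ≤ n) :
    ∏ j ∈ B, v j ≤ ∏ i : Fin l, v (Fin.castLE hl i) := by
  have hBe : B = Finset.univ.map (B.orderEmbOfFin hB).toEmbedding := by
    ext a
    simp only [Finset.mem_map, Finset.mem_univ, true_and, RelEmbedding.coe_toEmbedding]
    constructor
    · intro ha
      have := Finset.range_orderEmbOfFin B hB
      have : a ∈ Set.range (B.orderEmbOfFin hB) := by rw [this]; exact ha
      obtain ⟨i, hi⟩ := this
      exact ⟨i, hi⟩
    · rintro ⟨i, rfl⟩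
      exact Finset.orderEmbOfFin_mem B hB i
  rw [hBe, Finset.prod_map]
  apply Finset.prod_le_prod (fun i _ => hv0 _)
  intro i _
  apply hva
  rw [Fin.le_def]
  exact strictMono_val_le (B.orderEmbOfFin hB).strictMono i

end Sorting

section Core

lemma abel_nonpos : ∀ (k : ℕ) (c : ℕ → ℝ) (d : ℕ → ℝ), (∀ j, j < k → 0 ≤ c j) →
    (∀ i j, i ≤ j → j < k → c j ≤ c i) →
    (∀ l, l ≤ k → ∑ j ∈ Finset.range l, d j ≤ 0) →
    ∑ j ∈ Finset.range k, c j * d j ≤ 0 := by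
  intro k
  induction k with
  | zero => simp
  | succ k ih =>
    intro c d hc0 hca hS
    have h0 : ∀ j, c j * d j = (c j - c k) * d j + c k * d j := fun j => by ring
    have e1 : ∑ j ∈ Finset.range (k+1), c j * d j
        = (∑ j ∈ Finset.range k, (c j - c k) * d j) + c k * ∑ j ∈ Finset.range (k+1), d j := by
      rw [Finset.sum_congr rfl (fun j _ => h0 j), Finset.sum_add_distrib, ← Finset.mul_sum,
        Finset.sum_range_succ (f := fun j => (c j - c k) * d j)]
      simp
    rw [e1]
    have t2 : c k * ∑ j ∈ Finset.range (k+1), d j ≤ 0 :=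
      mul_nonpos_iff.mpr (Or.inl ⟨hc0 k (Nat.lt_succ_self k), hS (k+1) le_rfl⟩)
    have t1 : ∑ j ∈ Finset.range k, (c j - c k) * d j ≤ 0 := by
      apply ih
      · intro j hj
        have := hca j k (Nat.le_of_lt hj) (Nat.lt_succ_self k)
        linarith
      · intro i j hij hjk
        have := hca i j hij (Nat.lt_succ_of_lt hjk)
        linarith
      · intro l hl
        exact hS l (Nat.le_succ_of_le hl)
    linarith

/-- weak log-majorization implies weak majorization, for finite nonneg antitone sequences. -/
lemma sum_le_sum_of_prod_le : ∀ (k : ℕ) (U V : ℕ → ℝ),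
    (∀ j, j < k → 0 ≤ U j) → (∀ j, j < k → 0 ≤ V j) →
    (∀ i j, i ≤ j → j < k → U j ≤ U i) → (∀ i j, i ≤ j → j < k → V j ≤ V i) →
    (∀ l, l ≤ k → ∏ j ∈ Finset.range l, U j ≤ ∏ j ∈ Finset.range l, V j) →
    ∑ j ∈ Finset.range k, U j ≤ ∑ j ∈ Finset.range k, V j := by
  intro k
  induction k using Nat.strong_induction_on with
  | _ k ih =>
  intro U V hU0 hV0 hUa hVa hP
  rcases Nat.eq_zero_or_pos k with rfl | hkpos
  · simp
  by_cases hVz : ∃ j, j < k ∧ V j = 0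
  · -- V has a zero entry
    classical
    set r := Nat.find hVz with hr
    obtain ⟨hrk, hVr⟩ := Nat.find_spec hVz
    -- some U i is zero for i ≤ r
    have hprod0 : ∏ j ∈ Finset.range (r+1), U j = 0 := by
      have h1 := hP (r+1) hrk
      have h2 : ∏ j ∈ Finset.range (r+1), V j = 0 :=
        Finset.prod_eq_zero (Finset.mem_range.mpr (Nat.lt_succ_self r)) hVr
      have h3 : 0 ≤ ∏ j ∈ Finset.range (r+1), U j :=
        Finset.prod_nonneg fun j hj => hU0 j (lt_of_lt_of_le (Finset.mem_range.mp hj) hrk)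
      linarith [h1, h2.le]
    obtain ⟨i, hi, hUi⟩ := Finset.prod_eq_zero_iff.mp hprod0
    have hik : i < k := lt_of_lt_of_le (Finset.mem_range.mp hi) hrk
    have hUzero : ∀ j, i ≤ j → j < k → U j = 0 := fun j h1 h2 =>
      le_antisymm (hUi ▸ hUa i j h1 h2) (hU0 j h2)
    have hsplit : ∑ j ∈ Finset.range k, U j = ∑ j ∈ Finset.range i, U j := by
      rw [← Finset.sum_range_add_sum_Ico U (le_of_lt hik)]
      have : ∑ j ∈ Finset.Ico i k, U j = 0 := Finset.sum_eq_zero fun j hj => by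
        obtain ⟨h1, h2⟩ := Finset.mem_Ico.mp hj
        exact hUzero j h1 h2
      rw [this, add_zero]
    rw [hsplit]
    have step := ih i hik U V (fun j hj => hU0 j (hj.trans hik))
      (fun j hj => hV0 j (hj.trans hik))
      (fun a b hab hb => hUa a b hab (hb.trans hik))
      (fun a b hab hb => hVa a b hab (hb.trans hik))
      (fun l hl => hP l (hl.trans hik.le))
    refine step.trans (Finset.sum_le_sum_of_subset_of_nonneg ?_ ?_)
    · exact Finset.range_subset_range.mpr hik.le
    · intro j hj _; exact hV0 j (Finset.mem_range.mp hj)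
  · by_cases hUz : ∃ j, j < k ∧ U j = 0
    · classical
      set r := Nat.find hUz with hr
      obtain ⟨hrk, hUr⟩ := Nat.find_spec hUz
      have hUzero : ∀ j, r ≤ j → j < k → U j = 0 := fun j h1 h2 =>
        le_antisymm (hUr ▸ hUa r j h1 h2) (hU0 j h2)
      have hsplit : ∑ j ∈ Finset.range k, U j = ∑ j ∈ Finset.range r, U j := by
        rw [← Finset.sum_range_add_sum_Ico U (le_of_lt hrk)]
        have : ∑ j ∈ Finset.Ico r k, U j = 0 := Finset.sum_eq_zero fun j hj => by
          obtain ⟨h1, h2⟩ := Finset.mem_Ico.mp hj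
          exact hUzero j h1 h2
        rw [this, add_zero]
      rw [hsplit]
      have step := ih r hrk U V (fun j hj => hU0 j (hj.trans hrk))
        (fun j hj => hV0 j (hj.trans hrk))
        (fun a b hab hb => hUa a b hab (hb.trans hrk))
        (fun a b hab hb => hVa a b hab (hb.trans hrk))
        (fun l hl => hP l (hl.trans hrk.le))
      refine step.trans (Finset.sum_le_sum_of_subset_of_nonneg ?_ ?_)
      · exact Finset.range_subset_range.mpr hrk.le
      · intro j hj _; exact hV0 j (Finset.mem_range.mp hj)
    · -- all entries positive
      push_neg at hVz hUz
      have hUpos : ∀ j, j < k → 0 < U j := fun j hj => (hU0 j hj).lt_of_ne' (hUz j hj)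
      have hVpos : ∀ j, j < k → 0 < V j := fun j hj => (hV0 j hj).lt_of_ne' (hVz j hj)
      have step1 : ∑ j ∈ Finset.range k, (U j - V j)
          ≤ ∑ j ∈ Finset.range k, U j * (Real.log (U j) - Real.log (V j)) := by
        apply Finset.sum_le_sum
        intro j hj
        have hU := hUpos j (Finset.mem_range.mp hj)
        have hV := hVpos j (Finset.mem_range.mp hj)
        have h := Real.log_le_sub_one_of_pos (div_pos hV hU)
        rw [Real.log_div hV.ne' hU.ne'] at h
        have h3 := mul_le_mul_of_nonneg_left h hU.le
        have h4 : U j * (V j / U j - 1) = V j - U j := by field_simp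
        rw [h4] at h3
        nlinarith [h3]
      have step2 : ∑ j ∈ Finset.range k, U j * (Real.log (U j) - Real.log (V j)) ≤ 0 := by
        apply abel_nonpos k U (fun j => Real.log (U j) - Real.log (V j))
          (fun j hj => (hUpos j hj).le) hUa
        intro l hl
        have hprod : ∑ j ∈ Finset.range l, (Real.log (U j) - Real.log (V j))
            = Real.log (∏ j ∈ Finset.range l, U j) - Real.log (∏ j ∈ Finset.range l, V j) := by
          rw [Real.log_prod (fun j hj => (hUpos j (lt_of_lt_of_le (Finset.mem_range.mp hj) hl)).ne'),
            Real.log_prod (fun j hj => (hVpos j (lt_of_lt_of_le (Finset.mem_range.mp hj) hl)).ne'),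
            Finset.sum_sub_distrib]
        rw [hprod, sub_nonpos]
        apply Real.log_le_log
        · exact Finset.prod_pos fun j hj => hUpos j (lt_of_lt_of_le (Finset.mem_range.mp hj) hl)
        · exact hP l hl
      rw [← sub_nonpos, ← Finset.sum_sub_distrib]
      linarith [step1, step2]

end Core
section Transfer

variable {ι : Type*} [Fintype ι]

lemma sum_range_dite_eq_sum_map {n l : ℕ} (hl : l ≤ n) (g : Fin n → ℝ) (x : ι → ℝ)
    (E : Fin n ↪ ι) (hE : ∀ j, g j = x (E j)) :
    ∑ j ∈ Finset.range l, (if h : j < n then g ⟨j, h⟩ else 0)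
      = ∑ q ∈ (Finset.univ.map ((Fin.castLEEmb hl).trans E)), x q := by
  rw [Finset.sum_map]
  rw [← Fin.sum_univ_eq_sum_range (fun j => if h : j < n then g ⟨j, h⟩ else 0) l]
  apply Finset.sum_congr rfl
  intro i _
  have hi : (i : ℕ) < n := lt_of_lt_of_le i.isLt hl
  rw [dif_pos hi]
  rw [hE]
  rfl

lemma prod_range_dite_eq_prod_map {n l : ℕ} (hl : l ≤ n) (g : Fin n → ℝ) (x : ι → ℝ)
    (E : Fin n ↪ ι) (hE : ∀ j, g j = x (E j)) :
    ∏ j ∈ Finset.range l, (if h : j < n then g ⟨j, h⟩ else 0)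
      = ∏ q ∈ (Finset.univ.map ((Fin.castLEEmb hl).trans E)), x q := by
  rw [Finset.prod_map]
  rw [← Fin.prod_univ_eq_prod_range (fun j => if h : j < n then g ⟨j, h⟩ else 0) l]
  apply Finset.prod_congr rfl
  intro i _
  have hi : (i : ℕ) < n := lt_of_lt_of_le i.isLt hl
  rw [dif_pos hi]
  rw [hE]
  rfl

/-- weak log-majorization (in sup-over-subsets form) implies Ky Fan sum domination. -/
lemma kfan_le_kfan {x y : ι → ℝ} (hx : ∀ q, 0 ≤ x q) (hy : ∀ q, 0 ≤ y q)
    (h : ∀ l, kprod x l ≤ kprod y l) (k : ℕ) : kfan x k ≤ kfan y k := by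
  apply kfan_le _ (kfan_nonneg hy k)
  intro T hT
  have hk : k ≤ Fintype.card ι := hT ▸ T.card_le_univ
  -- enumerate T
  let e1 : Fin k ≃ {q // q ∈ T} := (T.equivFin.trans (finCongr hT)).symm
  let u0 : Fin k → ℝ := fun j => x (e1 j)
  let uS : Fin k → ℝ := dsort u0
  let EU : Fin k ↪ ι := ⟨fun j => ↑(e1 j), fun a b hab => e1.injective (Subtype.ext hab)⟩
  let ES : Fin k ↪ ι := ((dsortPerm u0).toEmbedding).trans EU
  have huS : ∀ j, uS j = x (ES j) := fun j => rfl
  have huSa : Antitone uS := dsort_antitone u0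
  have huS0 : ∀ j, 0 ≤ uS j := fun j => hx _
  -- enumerate ι sorted by y
  set n := Fintype.card ι with hn
  let e2 : Fin n ≃ ι := (Fintype.equivFin ι).symm
  let v0 : Fin n → ℝ := fun j => y (e2 j)
  let vS : Fin n → ℝ := dsort v0
  let EV : Fin n ≃ ι := (dsortPerm v0).trans e2
  have hvS : ∀ j, vS j = y (EV j) := fun j => rfl
  have hvSa : Antitone vS := dsort_antitone v0
  have hvS0 : ∀ j, 0 ≤ vS j := fun j => hy _
  -- the ℕ-indexed sequences
  set U : ℕ → ℝ := fun j => if h : j < k then uS ⟨j, h⟩ else 0 with hU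
  set V : ℕ → ℝ := fun j => if h : j < n then vS ⟨j, h⟩ else 0 with hV
  have hU0 : ∀ j, j < k → 0 ≤ U j := by
    intro j hj; rw [hU]; simp only [dif_pos hj]; exact huS0 _
  have hV0 : ∀ j, j < k → 0 ≤ V j := by
    intro j hj; rw [hV]; simp only [dif_pos (lt_of_lt_of_le hj hk)]; exact hvS0 _
  have hUa : ∀ i j, i ≤ j → j < k → U j ≤ U i := by
    intro i j hij hj
    have hi : i < k := lt_of_le_of_lt hij hj
    rw [hU]; simp only [dif_pos hj, dif_pos hi]
    exact huSa (show (⟨i, hi⟩ : Fin k) ≤ ⟨j, hj⟩ from hij)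
  have hVa : ∀ i j, i ≤ j → j < k → V j ≤ V i := by
    intro i j hij hj
    have hjn : j < n := lt_of_lt_of_le hj hk
    have hin : i < n := lt_of_le_of_lt hij hjn
    rw [hV]; simp only [dif_pos hjn, dif_pos hin]
    exact hvSa (show (⟨i, hin⟩ : Fin n) ≤ ⟨j, hjn⟩ from hij)
  have hprod : ∀ l, l ≤ k → ∏ j ∈ Finset.range l, U j ≤ ∏ j ∈ Finset.range l, V j := by
    intro l hl
    have hln : l ≤ n := hl.trans hk
    have h1 : ∏ j ∈ Finset.range l, U j ≤ kprod x l := by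
      rw [hU, prod_range_dite_eq_prod_map hl uS x ES huS]
      exact le_kprod (by simp)
    have h2 : kprod y l ≤ ∏ j ∈ Finset.range l, V j := by
      rw [hV, prod_range_dite_eq_prod_map hln vS y EV.toEmbedding hvS]
      rw [Finset.prod_map]
      apply kprod_le _ (Finset.prod_nonneg fun i _ => hy _)
      intro T' hT'
      -- transport T' through EV
      have hTT : T' = (T'.map EV.symm.toEmbedding).map EV.toEmbedding := by
        rw [Finset.map_map]
        ext a
        simp
      rw [hTT, Finset.prod_map]
      have hcard : (T'.map EV.symm.toEmbedding).card = l := by rwa [Finset.card_map]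
      have := prod_le_top vS hvSa hvS0 (T'.map EV.symm.toEmbedding) hcard hln
      refine le_trans (le_of_eq ?_) (this.trans (le_of_eq ?_))
      · apply Finset.prod_congr rfl
        intro b _
        rw [hvS]
        rfl
      · apply Finset.prod_congr rfl
        intro i _
        rw [hvS]
        rfl
    exact h1.trans ((h l).trans h2)
  have core := sum_le_sum_of_prod_le k U V hU0 hV0 hUa hVa hprod
  -- identify the two sides
  have hEUuniv : Finset.univ.map EU = T := by
    ext a
    rw [Finset.mem_map]
    constructor
    · rintro ⟨i, -, rfl⟩
      exact (e1 i).2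
    · intro ha
      exact ⟨e1.symm ⟨a, ha⟩, Finset.mem_univ _, by show (↑(e1 (e1.symm ⟨a, ha⟩)) : ι) = a; simp⟩
  have hmap : Finset.univ.map ((Fin.castLEEmb (le_refl k)).trans ES) = T := by
    rw [← Finset.map_map]
    have h1 : Finset.univ.map (Fin.castLEEmb (le_refl k)) = Finset.univ := by
      ext a
      rw [Finset.mem_map]
      simp only [Finset.mem_univ, true_and, iff_true]
      exact ⟨a, rfl⟩
    rw [h1]
    show Finset.univ.map (((dsortPerm u0).toEmbedding).trans EU) = T
    rw [← Finset.map_map, Finset.map_univ_equiv, hEUuniv]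
  have hTsum : ∑ q ∈ T, x q = ∑ j ∈ Finset.range k, U j := by
    rw [hU, sum_range_dite_eq_sum_map (le_refl k) uS x ES huS, hmap]
  have hVsum : ∑ j ∈ Finset.range k, V j ≤ kfan y k := by
    rw [hV, sum_range_dite_eq_sum_map hk vS y EV.toEmbedding hvS]
    exact le_kfan (by simp)
  rw [hTsum]
  exact core.trans hVsum

end Transfer
section CauchyBinet

open Matrix

/-- The finset of strictly monotone maps `Fin l → Fin m`. -/
def smF (l m : ℕ) : Finset (Fin l → Fin m) :=
  Finset.univ.filter (fun g => StrictMono g)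

lemma mem_smF {l m : ℕ} {g : Fin l → Fin m} : g ∈ smF l m ↔ StrictMono g := by
  rw [smF, Finset.mem_filter]
  simp

noncomputable def imF {l m : ℕ} (f : Fin l → Fin m) : Finset (Fin m) := Finset.univ.image f

lemma imF_card {l m : ℕ} {f : Fin l → Fin m} (hf : Function.Injective f) :
    (imF f).card = l := by
  rw [imF, Finset.card_image_of_injective _ hf, Finset.card_univ, Fintype.card_fin]

lemma mem_imF {l m : ℕ} (f : Fin l → Fin m) (i : Fin l) : f i ∈ imF f :=
  Finset.mem_image_of_mem f (Finset.mem_univ i)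

noncomputable def gOf {l m : ℕ} (f : Fin l → Fin m) (hf : Function.Injective f) :
    Fin l → Fin m :=
  ⇑((imF f).orderEmbOfFin (imF_card hf))

lemma gOf_strictMono {l m : ℕ} (f : Fin l → Fin m) (hf : Function.Injective f) :
    StrictMono (gOf f hf) := ((imF f).orderEmbOfFin (imF_card hf)).strictMono

noncomputable def pOf {l m : ℕ} (f : Fin l → Fin m) (hf : Function.Injective f) :
    Equiv.Perm (Fin l) :=
  Equiv.ofBijective (fun i => ((imF f).orderIsoOfFin (imF_card hf)).symm ⟨f i, mem_imF f i⟩)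
    (Finite.injective_iff_bijective.mp (by
      intro a b hab
      apply hf
      have := congrArg (((imF f).orderIsoOfFin (imF_card hf)) ·) hab
      simpa using this))

lemma gOf_comp {l m : ℕ} (f : Fin l → Fin m) (hf : Function.Injective f) (i : Fin l) :
    gOf f hf (pOf f hf i) = f i := by
  show ((imF f).orderEmbOfFin (imF_card hf)) _ = f i
  rw [← Finset.coe_orderIsoOfFin_apply]
  have hpof : (pOf f hf) i = ((imF f).orderIsoOfFin (imF_card hf)).symm ⟨f i, mem_imF f i⟩ :=
    rfl
  rw [hpof, OrderIso.apply_symm_apply]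

lemma comp_injective {l m : ℕ} {g : Fin l → Fin m} (hg : StrictMono g)
    (π : Equiv.Perm (Fin l)) : Function.Injective (g ∘ ⇑π) :=
  hg.injective.comp π.injective

lemma gOf_eq {l m : ℕ} {g : Fin l → Fin m} (hg : StrictMono g) (π : Equiv.Perm (Fin l)) :
    gOf (g ∘ ⇑π) (comp_injective hg π) = g := by
  have him : ∀ x, g x ∈ imF (g ∘ ⇑π) := by
    intro x
    rw [imF]
    refine Finset.mem_image.mpr ⟨π.symm x, Finset.mem_univ _, ?_⟩
    simp
  exact (Finset.orderEmbOfFin_unique (imF_card (comp_injective hg π)) him hg).symm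

lemma pOf_eq {l m : ℕ} {g : Fin l → Fin m} (hg : StrictMono g) (π : Equiv.Perm (Fin l)) :
    pOf (g ∘ ⇑π) (comp_injective hg π) = π := by
  apply Equiv.ext
  intro i
  have h1 := gOf_comp (g ∘ ⇑π) (comp_injective hg π) i
  rw [gOf_eq hg π] at h1
  exact hg.injective h1

theorem cauchy_binet {R : Type*} [CommRing R] {l m : ℕ}
    (A : Matrix (Fin l) (Fin m) R) (B : Matrix (Fin m) (Fin l) R) :
    (A * B).det = ∑ g ∈ smF l m, (A.submatrix id g).det * (B.submatrix g id).det := by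
  classical
  have expand : (A * B).det
      = ∑ f : Fin l → Fin m, (A.submatrix id f).det * ∏ i, B (f i) i := by
    rw [det_apply']
    have h1 : ∀ σ : Equiv.Perm (Fin l),
        (↑↑(Equiv.Perm.sign σ) : R) * ∏ i, (A * B) (σ i) i
        = ∑ f : Fin l → Fin m,
            (↑↑(Equiv.Perm.sign σ) : R) * (∏ i, A (σ i) (f i)) * ∏ i, B (f i) i := by
      intro σ
      have h2 : ∏ i, (A * B) (σ i) i
          = ∑ f : Fin l → Fin m, ∏ i, (A (σ i) (f i) * B (f i) i) := by
        simp_rw [Matrix.mul_apply]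
        rw [Finset.prod_univ_sum]
        rw [Fintype.piFinset_univ]
      rw [h2, Finset.mul_sum]
      apply Finset.sum_congr rfl
      intro f _
      rw [Finset.prod_mul_distrib]
      ring
    rw [Finset.sum_congr rfl (fun σ _ => h1 σ), Finset.sum_comm]
    apply Finset.sum_congr rfl
    intro f _
    rw [det_apply', Finset.sum_mul]
    apply Finset.sum_congr rfl
    intro σ _
    simp only [Matrix.submatrix_apply, id_eq]
  rw [expand]
  rw [← Finset.sum_filter_add_sum_filter_not Finset.univ (fun f => Function.Injective f)]
  have hnon : ∑ f ∈ Finset.univ.filter (fun f : Fin l → Fin m => ¬ Function.Injective f),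
      (A.submatrix id f).det * ∏ i, B (f i) i = 0 := by
    apply Finset.sum_eq_zero
    intro f hf
    rw [Finset.mem_filter] at hf
    obtain ⟨i, j, hij, hne⟩ : ∃ i j, f i = f j ∧ i ≠ j := by
      by_contra hcon
      push_neg at hcon
      exact hf.2 (fun a b hab => hcon a b hab)
    rw [Matrix.det_zero_of_column_eq hne
      (fun k => by simp only [Matrix.submatrix_apply, id_eq, hij]), zero_mul]
  rw [hnon, add_zero]
  have hbij : ∑ f ∈ Finset.univ.filter (fun f : Fin l → Fin m => Function.Injective f),
      (A.submatrix id f).det * ∏ i, B (f i) i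
      = ∑ gp ∈ (smF l m) ×ˢ (Finset.univ : Finset (Equiv.Perm (Fin l))),
        (A.submatrix id (gp.1 ∘ ⇑gp.2)).det * ∏ i, B ((gp.1 ∘ ⇑gp.2) i) i := by
    refine Finset.sum_bij'
      (i := fun f hf => (gOf f (Finset.mem_filter.mp hf).2, pOf f (Finset.mem_filter.mp hf).2))
      (j := fun gp _ => gp.1 ∘ ⇑gp.2) ?hi ?hj ?left ?right ?hterm
    case hi =>
      intro f hf
      exact Finset.mem_product.mpr
        ⟨mem_smF.mpr (gOf_strictMono f (Finset.mem_filter.mp hf).2), Finset.mem_univ _⟩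
    case hj =>
      intro gp hgp
      refine Finset.mem_filter.mpr ⟨Finset.mem_univ _, ?_⟩
      exact comp_injective (mem_smF.mp (Finset.mem_product.mp hgp).1) gp.2
    case left =>
      intro f hf
      funext i
      exact gOf_comp f (Finset.mem_filter.mp hf).2 i
    case right =>
      rintro ⟨g, π⟩ hgp
      have hg := mem_smF.mp (Finset.mem_product.mp hgp).1
      have e1 : gOf (g ∘ ⇑π) (comp_injective hg π) = g := gOf_eq hg π
      have e2 : pOf (g ∘ ⇑π) (comp_injective hg π) = π := pOf_eq hg π
      simp only [Prod.mk.injEq]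
      exact ⟨e1, e2⟩
    case hterm =>
      intro f hf
      have hcomp : (gOf f (Finset.mem_filter.mp hf).2) ∘ ⇑(pOf f (Finset.mem_filter.mp hf).2)
          = f := funext (gOf_comp f (Finset.mem_filter.mp hf).2)
      rw [hcomp]
  rw [hbij, Finset.sum_product]
  apply Finset.sum_congr rfl
  intro g hg
  have hperm : ∀ π : Equiv.Perm (Fin l),
      (A.submatrix id (g ∘ ⇑π)).det = (↑↑(Equiv.Perm.sign π) : R) * (A.submatrix id g).det := by
    intro π
    have : A.submatrix id (g ∘ ⇑π) = (A.submatrix id g).submatrix id ⇑π := by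
      rw [Matrix.submatrix_submatrix]
      rfl
    rw [this, Matrix.det_permute']
  calc ∑ π : Equiv.Perm (Fin l), (A.submatrix id (g ∘ ⇑π)).det * ∏ i, B ((g ∘ ⇑π) i) i
      = (A.submatrix id g).det
        * ∑ π : Equiv.Perm (Fin l), (↑↑(Equiv.Perm.sign π) : R) * ∏ i, B (g (π i)) i := by
        rw [Finset.mul_sum]
        apply Finset.sum_congr rfl
        intro π _
        rw [hperm π]
        simp only [Function.comp_apply]
        ring
    _ = (A.submatrix id g).det * (B.submatrix g id).det := by
        rw [det_apply' (B.submatrix g id)]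
        simp only [Matrix.submatrix_apply, id_eq]

end CauchyBinet
section MatrixBounds

open Matrix
open scoped ComplexOrder

lemma det_conjTranspose_mul_self_eq {m l : ℕ} (X : Matrix (Fin m) (Fin l) ℂ) :
    (Xᴴ * X).det = ((∑ g ∈ smF l m, Complex.normSq ((X.submatrix g id).det) : ℝ) : ℂ) := by
  rw [cauchy_binet]
  push_cast
  apply Finset.sum_congr rfl
  intro g _
  have h1 : Xᴴ.submatrix id g = (X.submatrix g id)ᴴ := by
    rw [Matrix.conjTranspose_submatrix]
  rw [h1, Matrix.det_conjTranspose, Complex.star_def, mul_comm, Complex.mul_conj]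

lemma det_conjTranspose_mul_self_re_nonneg {m l : ℕ} (X : Matrix (Fin m) (Fin l) ℂ) :
    0 ≤ ((Xᴴ * X).det).re := by
  rw [det_conjTranspose_mul_self_eq, Complex.ofReal_re]
  exact Finset.sum_nonneg fun g _ => Complex.normSq_nonneg _

lemma det_weighted_eq {m l : ℕ} (d : Fin m → ℝ) (hd : ∀ i, 0 ≤ d i)
    (Y : Matrix (Fin m) (Fin l) ℂ) :
    (Yᴴ * (Matrix.diagonal (fun i => (d i : ℂ))) * Y).det
      = ((∑ g ∈ smF l m, (∏ b, d (g b)) * Complex.normSq ((Y.submatrix g id).det) : ℝ) : ℂ) := by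
  set e := fun i => Real.sqrt (d i) with he
  have hsq : ∀ i, e i * e i = d i := fun i => Real.mul_self_sqrt (hd i)
  set D2 : Matrix (Fin m) (Fin m) ℂ := Matrix.diagonal (fun i => (e i : ℂ)) with hD2
  have hD2H : D2ᴴ = D2 := by
    have hst : star (fun i => ((e i : ℝ) : ℂ)) = fun i => ((e i : ℝ) : ℂ) := by
      funext i
      rw [Pi.star_apply, Complex.star_def, Complex.conj_ofReal]
    rw [hD2, Matrix.diagonal_conjTranspose, hst]
  have hDD : D2 * D2 = Matrix.diagonal (fun i => (d i : ℂ)) := by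
    have hee : (fun i => ((e i : ℝ) : ℂ) * ((e i : ℝ) : ℂ)) = fun i => ((d i : ℝ) : ℂ) := by
      funext i
      rw [← Complex.ofReal_mul, hsq]
    rw [hD2, Matrix.diagonal_mul_diagonal, hee]
  have hfact : Yᴴ * (Matrix.diagonal (fun i => (d i : ℂ))) * Y = (D2 * Y)ᴴ * (D2 * Y) := by
    rw [Matrix.conjTranspose_mul, hD2H, ← hDD]
    simp only [Matrix.mul_assoc]
  rw [hfact, det_conjTranspose_mul_self_eq]
  congr 1
  apply Finset.sum_congr rfl
  intro g hg
  have hsub : (D2 * Y).submatrix g id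
      = Matrix.diagonal (fun b => (e (g b) : ℂ)) * (Y.submatrix g id) := by
    ext a b
    rw [Matrix.submatrix_apply, hD2, Matrix.diagonal_mul, Matrix.diagonal_mul,
      Matrix.submatrix_apply]
  rw [hsub, Matrix.det_mul, Matrix.det_diagonal, Complex.normSq_mul]
  have hc : (∏ b, ((e (g b) : ℝ) : ℂ)) = (((∏ b, e (g b) : ℝ)) : ℂ) := by push_cast; rfl
  rw [hc, Complex.normSq_ofReal]
  congr 1
  rw [← Finset.prod_mul_distrib]
  exact Finset.prod_congr rfl fun b _ => hsq (g b)

lemma prod_comp_le_kprod {m l : ℕ} (d : Fin m → ℝ) {g : Fin l → Fin m}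
    (hg : Function.Injective g) : ∏ b, d (g b) ≤ kprod d l := by
  have : ∏ b, d (g b) = ∏ q ∈ Finset.univ.map ⟨g, hg⟩, d q := by
    rw [Finset.prod_map]; rfl
  rw [this]
  exact le_kprod (by simp)

lemma compression_le {m l : ℕ} (H : Matrix (Fin m) (Fin m) ℂ) (hH : H.IsHermitian)
    (hpos : ∀ i, 0 ≤ hH.eigenvalues i) (X : Matrix (Fin m) (Fin l) ℂ) :
    ((Xᴴ * H * X).det).re ≤ kprod hH.eigenvalues l * ((Xᴴ * X).det).re := by
  set U : Matrix (Fin m) (Fin m) ℂ := ↑(hH.eigenvectorUnitary) with hU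
  have hUU : Uᴴ * U = 1 := by
    rw [← Matrix.star_eq_conjTranspose]
    exact Matrix.mem_unitaryGroup_iff'.mp (hH.eigenvectorUnitary).2
  have hUU' : U * Uᴴ = 1 := by
    rw [← Matrix.star_eq_conjTranspose]
    exact Matrix.mem_unitaryGroup_iff.mp (hH.eigenvectorUnitary).2
  set Y := Uᴴ * X with hYdef
  have hsp2 : Xᴴ * H * X
      = Yᴴ * (Matrix.diagonal (fun i => ((hH.eigenvalues i : ℝ) : ℂ))) * Y := by
    have hYH : Yᴴ = Xᴴ * U := by
      rw [hYdef, Matrix.conjTranspose_mul, Matrix.conjTranspose_conjTranspose]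
    rw [hYdef, hYH]
    conv_lhs => rw [hH.spectral_theorem]
    rw [Unitary.conjStarAlgAut_apply, ← hU, Matrix.star_eq_conjTranspose]
    have : Matrix.diagonal (RCLike.ofReal ∘ hH.eigenvalues)
        = Matrix.diagonal (fun i => ((hH.eigenvalues i : ℝ) : ℂ)) := rfl
    rw [this]
    simp only [Matrix.mul_assoc]
  have hYY : Yᴴ * Y = Xᴴ * X := by
    rw [hYdef, Matrix.conjTranspose_mul, Matrix.conjTranspose_conjTranspose]
    calc Xᴴ * U * (Uᴴ * X) = Xᴴ * (U * Uᴴ) * X := by simp only [Matrix.mul_assoc]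
      _ = Xᴴ * X := by rw [hUU', Matrix.mul_one]
  rw [hsp2, det_weighted_eq _ hpos Y, Complex.ofReal_re]
  have hXX : ((Xᴴ * X).det).re = ∑ g ∈ smF l m, Complex.normSq ((Y.submatrix g id).det) := by
    rw [← hYY, det_conjTranspose_mul_self_eq, Complex.ofReal_re]
  rw [hXX, Finset.mul_sum]
  apply Finset.sum_le_sum
  intro g hg
  apply mul_le_mul_of_nonneg_right _ (Complex.normSq_nonneg _)
  exact prod_comp_le_kprod hH.eigenvalues (mem_smF.mp hg).injective

lemma list_prod_bound {m l : ℕ} :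
    ∀ (L : List (Matrix (Fin m) (Fin m) ℂ)) (X : Matrix (Fin m) (Fin l) ℂ),
    ((Xᴴ * (L.prod)ᴴ * L.prod * X).det).re
      ≤ (L.map (fun A => kprod (fun r => (sv A r)^2) l)).prod * ((Xᴴ * X).det).re := by
  intro L
  induction L with
  | nil =>
    intro X
    simp only [List.prod_nil, Matrix.conjTranspose_one, Matrix.mul_one, List.map_nil, one_mul]
    exact le_rfl
  | cons A L' ih =>
    intro X
    have hH := Matrix.isHermitian_conjTranspose_mul_self A
    have hpos : ∀ i, 0 ≤ hH.eigenvalues i :=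
      fun i => (Matrix.posSemidef_conjTranspose_mul_self A).eigenvalues_nonneg i
    have hassoc : Xᴴ * ((A :: L').prod)ᴴ * (A :: L').prod * X
        = ((L'.prod * X)ᴴ) * (Aᴴ * A) * (L'.prod * X) := by
      rw [List.prod_cons, Matrix.conjTranspose_mul, Matrix.conjTranspose_mul]
      simp only [Matrix.mul_assoc]
    rw [hassoc]
    have step := compression_le (Aᴴ * A) hH hpos (L'.prod * X)
    have hkey : hH.eigenvalues = fun r => (sv A r)^2 := by
      funext r
      rw [sv, Real.sq_sqrt (hpos r)]
    rw [hkey] at step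
    have hassoc2 : (L'.prod * X)ᴴ * (L'.prod * X) = Xᴴ * (L'.prod)ᴴ * L'.prod * X := by
      rw [Matrix.conjTranspose_mul]
      simp only [Matrix.mul_assoc]
    have step2 := ih X
    rw [← hassoc2] at step2
    calc ((L'.prod * X)ᴴ * (Aᴴ * A) * (L'.prod * X)).det.re
        ≤ kprod (fun r => (sv A r)^2) l * (((L'.prod * X)ᴴ * (L'.prod * X)).det).re := step
      _ ≤ kprod (fun r => (sv A r)^2) l
          * ((L'.map (fun A => kprod (fun r => (sv A r)^2) l)).prod * ((Xᴴ * X).det).re) :=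
            mul_le_mul_of_nonneg_left step2
              (kprod_nonneg (fun r => sq_nonneg _) l)
      _ = ((A :: L').map (fun A => kprod (fun r => (sv A r)^2) l)).prod * ((Xᴴ * X).det).re := by
          rw [List.map_cons, List.prod_cons, mul_assoc]

lemma submatrix_one_of_injective {m l : ℕ} {f : Fin l → Fin m} (hf : Function.Injective f) :
    (1 : Matrix (Fin m) (Fin m) ℂ).submatrix f f = (1 : Matrix (Fin l) (Fin l) ℂ) := by
  ext a b
  rw [Matrix.submatrix_apply]
  by_cases hab : a = b
  · subst hab; simp
  · rw [Matrix.one_apply_ne (fun h => hab (hf h)), Matrix.one_apply_ne hab]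

lemma map_orderEmbOfFin {n l : ℕ} (S : Finset (Fin n)) (hS : S.card = l) :
    Finset.univ.map (S.orderEmbOfFin hS).toEmbedding = S := by
  ext a
  rw [Finset.mem_map]
  constructor
  · rintro ⟨i, -, rfl⟩
    exact Finset.orderEmbOfFin_mem S hS i
  · intro ha
    have h := Finset.range_orderEmbOfFin S hS
    have : a ∈ Set.range (S.orderEmbOfFin hS) := by rw [h]; exact ha
    obtain ⟨i, hi⟩ := this
    exact ⟨i, Finset.mem_univ _, hi⟩

/-- Per-block Horn-type inequality: subset products of singular values of a product of
matrices are bounded by products of the max `l`-subset products of squared singular values. -/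
lemma block_horn {m M : ℕ} (As : Fin M → Matrix (Fin m) (Fin m) ℂ) {l : ℕ}
    (S : Finset (Fin m)) (hS : S.card = l) :
    (∏ r ∈ S, sv ((List.ofFn As).prod) r)^2
      ≤ ∏ i, kprod (fun r => (sv (As i) r)^2) l := by
  set P := (List.ofFn As).prod with hP
  have hH := Matrix.isHermitian_conjTranspose_mul_self P
  have hpos : ∀ i, 0 ≤ hH.eigenvalues i :=
    fun i => (Matrix.posSemidef_conjTranspose_mul_self P).eigenvalues_nonneg i
  set U : Matrix (Fin m) (Fin m) ℂ := ↑(hH.eigenvectorUnitary) with hU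
  have hUU : Uᴴ * U = 1 := by
    rw [← Matrix.star_eq_conjTranspose]
    exact Matrix.mem_unitaryGroup_iff'.mp (hH.eigenvectorUnitary).2
  set emb : Fin l → Fin m := fun b => S.orderEmbOfFin hS b with hemb
  have hembInj : Function.Injective emb := (S.orderEmbOfFin hS).injective
  set W : Matrix (Fin m) (Fin l) ℂ := U.submatrix id emb with hW
  have hWH : Wᴴ = Uᴴ.submatrix emb id := by
    rw [hW, Matrix.conjTranspose_submatrix]
  have hWW : Wᴴ * W = 1 := by
    rw [hWH, hW, ← Matrix.submatrix_mul Uᴴ U emb id emb Function.bijective_id, hUU]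
    exact submatrix_one_of_injective hembInj
  have hdiag : Uᴴ * (Pᴴ * P) * U = Matrix.diagonal (fun i => ((hH.eigenvalues i : ℝ) : ℂ)) := by
    conv_lhs => rw [hH.spectral_theorem]
    rw [Unitary.conjStarAlgAut_apply, ← hU, Matrix.star_eq_conjTranspose]
    have hd : Matrix.diagonal (RCLike.ofReal ∘ hH.eigenvalues)
        = Matrix.diagonal (fun i => ((hH.eigenvalues i : ℝ) : ℂ)) := rfl
    calc Uᴴ * (U * Matrix.diagonal (RCLike.ofReal ∘ hH.eigenvalues) * Uᴴ) * U
        = (Uᴴ * U) * Matrix.diagonal (RCLike.ofReal ∘ hH.eigenvalues) * (Uᴴ * U) := by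
          simp only [Matrix.mul_assoc]
      _ = Matrix.diagonal (fun i => ((hH.eigenvalues i : ℝ) : ℂ)) := by
          rw [hUU, Matrix.one_mul, Matrix.mul_one, hd]
  have hcomp : Wᴴ * (Pᴴ * P) * W = (Uᴴ * (Pᴴ * P) * U).submatrix emb emb := by
    rw [hWH, hW]
    apply Eq.symm
    rw [Matrix.submatrix_mul (Uᴴ * (Pᴴ * P)) U emb id emb Function.bijective_id,
      Matrix.submatrix_mul Uᴴ (Pᴴ * P) emb id id Function.bijective_id,
      Matrix.submatrix_id_id]
  have hdiag2 : (Matrix.diagonal (fun i => ((hH.eigenvalues i : ℝ) : ℂ))).submatrix emb emb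
      = Matrix.diagonal (fun b => ((hH.eigenvalues (emb b) : ℝ) : ℂ)) := by
    ext a b
    rw [Matrix.submatrix_apply]
    by_cases hab : a = b
    · subst hab; simp [Matrix.diagonal_apply_eq]
    · rw [Matrix.diagonal_apply_ne _ (fun h => hab (hembInj h)),
        Matrix.diagonal_apply_ne _ hab]
  have hdet : ((Wᴴ * (Pᴴ * P) * W).det).re = ∏ r ∈ S, hH.eigenvalues r := by
    rw [hcomp, hdiag, hdiag2, Matrix.det_diagonal]
    have : (∏ b, ((hH.eigenvalues (emb b) : ℝ) : ℂ))
        = (((∏ b, hH.eigenvalues (emb b) : ℝ)) : ℂ) := by push_cast; rfl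
    rw [this, Complex.ofReal_re]
    rw [← map_orderEmbOfFin S hS, Finset.prod_map]
    rfl
  have hmain := list_prod_bound (List.ofFn As) W
  rw [← hP] at hmain
  have hWdet : ((Wᴴ * W).det).re = 1 := by rw [hWW, Matrix.det_one]; simp
  have hlist : ((List.ofFn As).map (fun A => kprod (fun r => (sv A r)^2) l)).prod
      = ∏ i, kprod (fun r => (sv (As i) r)^2) l := by
    rw [List.map_ofFn, List.prod_ofFn]
    rfl
  have hassoc3 : Wᴴ * Pᴴ * P * W = Wᴴ * (Pᴴ * P) * W := by simp only [Matrix.mul_assoc]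
  rw [hassoc3, hlist, hWdet, mul_one, hdet] at hmain
  calc (∏ r ∈ S, sv P r)^2 = ∏ r ∈ S, (sv P r)^2 := by rw [Finset.prod_pow]
    _ = ∏ r ∈ S, hH.eigenvalues r := by
        apply Finset.prod_congr rfl
        intro r _
        rw [sv, Real.sq_sqrt (hpos r)]
    _ ≤ ∏ i, kprod (fun r => (sv (As i) r)^2) l := hmain

end MatrixBounds
section Combine

lemma dsort_nonneg {n : ℕ} {v : Fin n → ℝ} (hv : ∀ r, 0 ≤ v r) (j : Fin n) :
    0 ≤ dsort v j := hv _

lemma prod_dsort_eq {n : ℕ} (v : Fin n → ℝ) (T : Finset (Fin n)) :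
    ∏ r ∈ T.map (dsortPerm v).symm.toEmbedding, dsort v r = ∏ r ∈ T, v r := by
  rw [Finset.prod_map]
  apply Finset.prod_congr rfl
  intro r _
  rw [dsort_eq]
  simp

lemma kprod_sq_le_top {n l : ℕ} (v : Fin n → ℝ) (hv : ∀ r, 0 ≤ v r) (hl : l ≤ n) :
    kprod (fun r => (v r)^2) l ≤ (∏ i : Fin l, dsort v (Fin.castLE hl i))^2 := by
  apply kprod_le _ (sq_nonneg _)
  intro T hT
  have h1 : ∏ r ∈ T, (v r)^2 = (∏ r ∈ T, v r)^2 := by rw [Finset.prod_pow]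
  rw [h1, ← prod_dsort_eq v T]
  have h3 := prod_le_top (dsort v) (dsort_antitone v) (dsort_nonneg hv)
    (T.map (dsortPerm v).symm.toEmbedding) (by rw [Finset.card_map, hT]) hl
  have hnn : 0 ≤ ∏ r ∈ T.map (dsortPerm v).symm.toEmbedding, dsort v r :=
    Finset.prod_nonneg fun r _ => dsort_nonneg hv _
  exact pow_le_pow_left₀ hnn h3 2

lemma claimA {m p M : ℕ} (C : Fin M → Fin p → Matrix (Fin m) (Fin m) ℂ) (l : ℕ) :
    kprod (svB (fun j => (List.ofFn (fun i => C i j)).prod)) l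
      ≤ kprod (fun q : Fin p × Fin m => ∏ i, dsort (sv (C i q.1)) q.2) l := by
  set P := fun j => (List.ofFn (fun i => C i j)).prod with hPdef
  set x := svB P with hxdef
  set y := fun q : Fin p × Fin m => ∏ i, dsort (sv (C i q.1)) q.2 with hydef
  have hx0 : ∀ q, 0 ≤ x q := fun q => Real.sqrt_nonneg _
  have hy0 : ∀ q, 0 ≤ y q := fun q =>
    Finset.prod_nonneg fun i _ => dsort_nonneg (fun r => Real.sqrt_nonneg _) _
  apply kprod_le _ (kprod_nonneg hy0 l)
  intro S hS
  classical
  set Sj := fun j : Fin p => (S.filter (fun q => q.1 = j)).image Prod.snd with hSjdef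
  have hinj : ∀ j : Fin p, ∀ a ∈ S.filter (fun q => q.1 = j),
      ∀ b ∈ S.filter (fun q => q.1 = j), a.2 = b.2 → a = b := by
    intro j a ha b hb hab
    have h1 := (Finset.mem_filter.mp ha).2
    have h2 := (Finset.mem_filter.mp hb).2
    exact Prod.ext (h1.trans h2.symm) hab
  have hSjcard : ∀ j, (Sj j).card = (S.filter (fun q => q.1 = j)).card := by
    intro j
    rw [hSjdef]
    exact Finset.card_image_of_injOn (fun a ha b hb hab => hinj j a ha b hb hab)
  have hljm : ∀ j, (Sj j).card ≤ m := fun j =>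
    le_trans (Finset.card_le_univ _) (by simp)
  -- fiberwise decomposition
  have hfibB : ∀ j : Fin p, ∏ q ∈ S.filter (fun q => q.1 = j), x q = ∏ r ∈ Sj j, x (j, r) := by
    intro j
    rw [hSjdef, Finset.prod_image (hinj j)]
    apply Finset.prod_congr rfl
    intro q hq
    have hq1 : q.1 = j := (Finset.mem_filter.mp hq).2
    rw [← hq1]
  have hfib : ∏ q ∈ S, x q = ∏ j, ∏ r ∈ Sj j, x (j, r) := by
    rw [← Finset.prod_fiberwise_of_maps_to (fun q (_ : q ∈ S) => Finset.mem_univ q.1) x]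
    exact Finset.prod_congr rfl fun j _ => hfibB j
  -- per-block bound
  have key : ∀ j, ∏ r ∈ Sj j, x (j, r)
      ≤ ∏ r ∈ Finset.univ.map (Fin.castLEEmb (hljm j)), y (j, r) := by
    intro j
    have hbh := block_horn (fun i => C i j) (Sj j) rfl
    have h2 : ∏ i, kprod (fun r => (sv (C i j) r)^2) ((Sj j).card)
        ≤ ∏ i, (∏ b : Fin ((Sj j).card), dsort (sv (C i j)) (Fin.castLE (hljm j) b))^2 :=
      Finset.prod_le_prod (fun i _ => kprod_nonneg (fun r => sq_nonneg _) _)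
        (fun i _ => kprod_sq_le_top (sv (C i j)) (fun r => Real.sqrt_nonneg _) (hljm j))
    have h3 : ∏ i, (∏ b : Fin ((Sj j).card), dsort (sv (C i j)) (Fin.castLE (hljm j) b))^2
        = (∏ b : Fin ((Sj j).card), y (j, Fin.castLE (hljm j) b))^2 := by
      rw [Finset.prod_pow]
      congr 1
      rw [Finset.prod_comm]
    have hsq : (∏ r ∈ Sj j, x (j, r))^2
        ≤ (∏ b : Fin ((Sj j).card), y (j, Fin.castLE (hljm j) b))^2 := by
      calc (∏ r ∈ Sj j, x (j, r))^2 = (∏ r ∈ Sj j, sv (P j) r)^2 := rfl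
        _ ≤ ∏ i, kprod (fun r => (sv (C i j) r)^2) ((Sj j).card) := hbh
        _ ≤ _ := h2
        _ = _ := h3
    have hbase : 0 ≤ ∏ b : Fin ((Sj j).card), y (j, Fin.castLE (hljm j) b) :=
      Finset.prod_nonneg fun b _ => hy0 _
    have := le_of_pow_le_pow_left₀ two_ne_zero hbase hsq
    refine this.trans (le_of_eq ?_)
    rw [Finset.prod_map]
    rfl
  -- assemble the target subset
  have hjinj : ∀ j : Fin p, Function.Injective (fun r : Fin m => ((j, r) : Fin p × Fin m)) := by
    intro j a b hab
    exact congrArg Prod.snd hab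
  set emb2 := fun j : Fin p => Function.Embedding.mk (fun r : Fin m => ((j, r) : Fin p × Fin m))
    (hjinj j) with hemb2
  set S' := Finset.univ.biUnion (fun j : Fin p =>
    (Finset.univ.map (Fin.castLEEmb (hljm j))).map (emb2 j)) with hS'def
  have hdisj : Set.PairwiseDisjoint ((Finset.univ : Finset (Fin p)) : Set (Fin p))
      (fun j : Fin p =>
      (Finset.univ.map (Fin.castLEEmb (hljm j))).map (emb2 j)) := by
    intro a _ b _ hab
    rw [Function.onFun]
    rw [Finset.disjoint_left]
    intro q hqa hqb
    obtain ⟨r1, -, hr1⟩ := Finset.mem_map.mp hqa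
    obtain ⟨r2, -, hr2⟩ := Finset.mem_map.mp hqb
    apply hab
    have h1 : a = q.1 := congrArg Prod.fst hr1
    have h2 : b = q.1 := congrArg Prod.fst hr2
    rw [h1, h2]
  have hS'card : S'.card = l := by
    rw [hS'def, Finset.card_biUnion (fun a ha b hb hab => hdisj ha hb hab)]
    have e1 : ∀ j, ((Finset.univ.map (Fin.castLEEmb (hljm j))).map (emb2 j)).card
        = (Sj j).card := by
      intro j
      rw [Finset.card_map, Finset.card_map, Finset.card_univ, Fintype.card_fin]
    rw [Finset.sum_congr rfl (fun j _ => e1 j)]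
    rw [Finset.sum_congr rfl (fun j _ => hSjcard j)]
    rw [← Finset.card_eq_sum_card_fiberwise (fun q (_ : q ∈ S) => Finset.mem_univ q.1)]
    exact hS
  have hprodS' : ∏ q ∈ S', y q
      = ∏ j, ∏ r ∈ Finset.univ.map (Fin.castLEEmb (hljm j)), y (j, r) := by
    rw [hS'def, Finset.prod_biUnion hdisj]
    apply Finset.prod_congr rfl
    intro j _
    rw [Finset.prod_map]
    rfl
  calc ∏ q ∈ S, x q = ∏ j, ∏ r ∈ Sj j, x (j, r) := hfib
    _ ≤ ∏ j, ∏ r ∈ Finset.univ.map (Fin.castLEEmb (hljm j)), y (j, r) :=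
        Finset.prod_le_prod (fun j _ => Finset.prod_nonneg fun r _ => hx0 _)
          (fun j _ => key j)
    _ = ∏ q ∈ S', y q := hprodS'.symm
    _ ≤ kprod y l := le_kprod hS'card

end Combine
section Final

lemma kyFanPow_eq {m p : ℕ} (X : Fin p → Matrix (Fin m) (Fin m) ℂ) (e : ℝ) (k : ℕ) :
    kyFanPow X e k = kfan (fun q => svB X q ^ e) k := rfl

lemma kprod_rpow_le {ι : Type*} [Fintype ι] {x y : ι → ℝ} (hx : ∀ q, 0 ≤ x q)
    (hy : ∀ q, 0 ≤ y q) {s : ℝ} (hs : 0 < s) (h : ∀ l, kprod x l ≤ kprod y l) (l : ℕ) :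
    kprod (fun q => x q ^ s) l ≤ kprod (fun q => y q ^ s) l := by
  apply kprod_le _ (kprod_nonneg (fun q => Real.rpow_nonneg (hy q) s) l)
  intro T hT
  have hl : l ≤ Fintype.card ι := hT ▸ T.card_le_univ
  obtain ⟨T', hT', hEq⟩ := kprod_attain y hl
  calc ∏ q ∈ T, x q ^ s = (∏ q ∈ T, x q) ^ s :=
        Real.finset_prod_rpow T x (fun i _ => hx i) s
    _ ≤ (kprod y l) ^ s :=
        Real.rpow_le_rpow (Finset.prod_nonneg fun q _ => hx q)
          ((le_kprod hT).trans (h l)) hs.le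
    _ = ∏ q ∈ T', y q ^ s := by
        rw [hEq, Real.finset_prod_rpow T' y (fun i _ => hy i) s]
    _ ≤ kprod (fun q => y q ^ s) l := le_kprod hT'

lemma multi_holder {κ : Type*} {M : ℕ} (T : Finset κ) (b : Fin M → ℝ) (hb : ∀ i, 0 < b i)
    (hb1 : ∑ i, b i = 1) (F : Fin M → κ → ℝ) (hF : ∀ i q, 0 ≤ F i q) :
    ∑ q ∈ T, ∏ i, (F i q) ^ (b i) ≤ ∏ i, (∑ q ∈ T, F i q) ^ (b i) := by
  by_cases hz : ∃ i, ∑ q ∈ T, F i q = 0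
  · obtain ⟨i0, hi0⟩ := hz
    have hF0 : ∀ q ∈ T, F i0 q = 0 :=
      (Finset.sum_eq_zero_iff_of_nonneg (fun q _ => hF i0 q)).mp hi0
    have hL : ∑ q ∈ T, ∏ i, (F i q) ^ (b i) = 0 :=
      Finset.sum_eq_zero fun q hq => Finset.prod_eq_zero (Finset.mem_univ i0)
        (by rw [hF0 q hq]; exact Real.zero_rpow (hb i0).ne')
    have hR : ∏ i, (∑ q ∈ T, F i q) ^ (b i) = 0 :=
      Finset.prod_eq_zero (Finset.mem_univ i0)
        (by rw [hi0]; exact Real.zero_rpow (hb i0).ne')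
    rw [hL, hR]
  · push_neg at hz
    have hA : ∀ i, 0 < ∑ q ∈ T, F i q :=
      fun i => (Finset.sum_nonneg fun q _ => hF i q).lt_of_ne' (hz i)
    have key : ∀ q ∈ T, ∏ i, (F i q) ^ (b i)
        ≤ (∏ i, (∑ q' ∈ T, F i q') ^ (b i)) * ∑ i, b i * (F i q / ∑ q' ∈ T, F i q') := by
      intro q hq
      have h1 : ∏ i, (F i q) ^ b i
          = (∏ i, (∑ q' ∈ T, F i q') ^ b i) * ∏ i, (F i q / ∑ q' ∈ T, F i q') ^ b i := by
        rw [← Finset.prod_mul_distrib]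
        refine Finset.prod_congr rfl fun i _ => ?_
        rw [← Real.mul_rpow (hA i).le (div_nonneg (hF i q) (hA i).le),
          mul_div_cancel₀ _ (hA i).ne']
      rw [h1]
      apply mul_le_mul_of_nonneg_left _
        (Finset.prod_nonneg fun i _ => Real.rpow_nonneg (hA i).le _)
      exact Real.geom_mean_le_arith_mean_weighted Finset.univ b _
        (fun i _ => (hb i).le) hb1 (fun i _ => div_nonneg (hF i q) (hA i).le)
    calc ∑ q ∈ T, ∏ i, (F i q) ^ b i
        ≤ ∑ q ∈ T, ((∏ i, (∑ q' ∈ T, F i q') ^ (b i))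
            * ∑ i, b i * (F i q / ∑ q' ∈ T, F i q')) := Finset.sum_le_sum key
      _ = (∏ i, (∑ q' ∈ T, F i q') ^ (b i))
            * ∑ q ∈ T, ∑ i, b i * (F i q / ∑ q' ∈ T, F i q') := by rw [← Finset.mul_sum]
      _ = (∏ i, (∑ q' ∈ T, F i q') ^ (b i)) * 1 := by
          congr 1
          rw [Finset.sum_comm]
          have : ∀ i : Fin M, ∑ q ∈ T, b i * (F i q / ∑ q' ∈ T, F i q') = b i := by
            intro i
            rw [← Finset.mul_sum, ← Finset.sum_div, div_self (hz i), mul_one]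
          rw [Finset.sum_congr rfl fun i _ => this i]
          exact hb1
      _ = ∏ i, (∑ q ∈ T, F i q) ^ (b i) := mul_one _


end Final

end AuxKF

/-- Ky Fan `k`-norm Hölder-type inequality for T-products.
Symmetric T-product tensors `C 1, …, C M` are represented by their Hermitian DFT
blocks `C i j`; the blocks of the T-product `C 1 ⋆ ⋯ ⋆ C M` are the blockwise
products.  For `s ≥ 1` and weights `w i > 0` with `∑ 1/w i = 1`,
`‖|∏ Cᵢ|^s‖_{(k)} ≤ ∏ᵢ (‖|Cᵢ|^{s wᵢ}‖_{(k)})^{1/wᵢ} ≤ ∑ᵢ ‖|Cᵢ|^{s wᵢ}‖_{(k)}/wᵢ`. -/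
theorem kyFan_holder_tproduct {m p M : ℕ}
    (C : Fin M → Fin p → Matrix (Fin m) (Fin m) ℂ)
    (hC : ∀ i j, (C i j).IsHermitian)
    (s : ℝ) (hs : 1 ≤ s)
    (w : Fin M → ℝ) (hw : ∀ i, 0 < w i) (hw1 : ∑ i, (w i)⁻¹ = 1)
    (k : ℕ) :
    kyFanPow (fun j => (List.ofFn (fun i => C i j)).prod) s k ≤
        ∏ i, kyFanPow (C i) (s * w i) k ^ (w i)⁻¹ ∧
      ∏ i, kyFanPow (C i) (s * w i) k ^ (w i)⁻¹ ≤
        ∑ i, kyFanPow (C i) (s * w i) k / w i := by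
  have hs0 : 0 < s := lt_of_lt_of_le one_pos hs
  set P := fun j => (List.ofFn (fun i => C i j)).prod with hPdef
  set zh := fun (i : Fin M) (q : Fin p × Fin m) => dsort (sv (C i q.1)) q.2 with hzhdef
  have hzh0 : ∀ i q, 0 ≤ zh i q := fun i q =>
    dsort_nonneg (fun r => Real.sqrt_nonneg _) _
  set y := fun q : Fin p × Fin m => ∏ i, zh i q with hydef
  have hy0 : ∀ q, 0 ≤ y q := fun q => Finset.prod_nonneg fun i _ => hzh0 i q
  have hkf0 : ∀ i, 0 ≤ kyFanPow (C i) (s * w i) k := by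
    intro i
    rw [kyFanPow_eq]
    exact kfan_nonneg (fun q => Real.rpow_nonneg (Real.sqrt_nonneg _) _) k
  -- permutation invariance for each i
  have hper : ∀ (i : Fin M) (e : ℝ), kfan (fun q => zh i q ^ e) k = kyFanPow (C i) e k := by
    intro i e
    rw [kyFanPow_eq]
    have heq : (fun q : Fin p × Fin m => zh i q ^ e)
        = fun q => ((fun q' : Fin p × Fin m => svB (C i) q' ^ e)
            ((Equiv.prodShear (Equiv.refl (Fin p))
              (fun j => dsortPerm (sv (C i j)))) q)) := by
      funext q
      rfl
    rw [heq]
    exact kfan_comp_equiv (fun q' : Fin p × Fin m => svB (C i) q' ^ e)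
      ((Equiv.refl (Fin p)).prodShear fun j => dsortPerm (sv (C i j))) k
  -- part 1
  have chain1 : kyFanPow P s k ≤ kfan (fun q => y q ^ s) k := by
    rw [kyFanPow_eq]
    exact kfan_le_kfan (fun q => Real.rpow_nonneg (Real.sqrt_nonneg _) _)
      (fun q => Real.rpow_nonneg (hy0 q) _)
      (fun l => kprod_rpow_le (fun q => Real.sqrt_nonneg _) hy0 hs0
        (fun l' => claimA C l') l) k
  have chain2 : kfan (fun q => y q ^ s) k
      ≤ ∏ i, kyFanPow (C i) (s * w i) k ^ (w i)⁻¹ := by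
    have hRnn : 0 ≤ ∏ i, kyFanPow (C i) (s * w i) k ^ (w i)⁻¹ :=
      Finset.prod_nonneg fun i _ => Real.rpow_nonneg (hkf0 i) _
    apply kfan_le _ hRnn
    intro T hT
    have hpoint : ∀ q, y q ^ s = ∏ i, (zh i q ^ (s * w i)) ^ (w i)⁻¹ := by
      intro q
      rw [hydef]
      rw [← Real.finset_prod_rpow Finset.univ _ (fun i _ => hzh0 i q) s]
      apply Finset.prod_congr rfl
      intro i _
      rw [← Real.rpow_mul (hzh0 i q), mul_inv_cancel_right₀ (hw i).ne' s]
    calc ∑ q ∈ T, y q ^ s = ∑ q ∈ T, ∏ i, (zh i q ^ (s * w i)) ^ (w i)⁻¹ :=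
          Finset.sum_congr rfl fun q _ => hpoint q
      _ ≤ ∏ i, (∑ q ∈ T, zh i q ^ (s * w i)) ^ (w i)⁻¹ :=
          multi_holder T (fun i => (w i)⁻¹) (fun i => inv_pos.mpr (hw i)) hw1
            (fun i q => zh i q ^ (s * w i)) (fun i q => Real.rpow_nonneg (hzh0 i q) _)
      _ ≤ ∏ i, kyFanPow (C i) (s * w i) k ^ (w i)⁻¹ := by
          apply Finset.prod_le_prod
          · intro i _
            exact Real.rpow_nonneg
              (Finset.sum_nonneg fun q _ => Real.rpow_nonneg (hzh0 i q) _) _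
          · intro i _
            apply Real.rpow_le_rpow
              (Finset.sum_nonneg fun q _ => Real.rpow_nonneg (hzh0 i q) _)
              _ (inv_nonneg.mpr (hw i).le)
            rw [← hper i (s * w i)]
            exact le_kfan hT
  -- part 2 (AM-GM)
  have part2 : ∏ i, kyFanPow (C i) (s * w i) k ^ (w i)⁻¹
      ≤ ∑ i, kyFanPow (C i) (s * w i) k / w i := by
    have := Real.geom_mean_le_arith_mean_weighted Finset.univ (fun i => (w i)⁻¹)
      (fun i => kyFanPow (C i) (s * w i) k)
      (fun i _ => inv_nonneg.mpr (hw i).le) hw1 (fun i _ => hkf0 i)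
    refine this.trans (le_of_eq ?_)
    apply Finset.sum_congr rfl
    intro i _
    rw [div_eq_mul_inv, mul_comm]
  exact ⟨chain1.trans chain2, part2⟩
end
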